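/- arXiv:2210.16894 — 5 statements merged into one kernel-verified Lean document; each statement's English description precedes it below -/
import Mathlib

section
/- (Lemma 1.) Let P_s be a probability measure on X and ŵ : X → ℝ a measurable function with 0 ≤ ŵ(x) ≤ B for all x, such that x ↦ ŵ(x) φ(x) is Bochner integrable with respect to P_s, and set μ_{t'} = ∫ ŵ(x) φ(x) dP_s(x). Then for every δ ∈ (0,1), with probability at least 1 − δ over an i.i.d. sample x_1,…,x_{n_s} from P_s, the weighted empirical embedding mean satisfies ‖ (1/n_s) Σ_{i=1}^{n_s} ŵ(x_i) φ(x_i) − μ_{t'} ‖ ≤ B √(M/n_s) · (1 + √(2 log(1/δ))). -/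
open MeasureTheory
open scoped RealInnerProductSpace BigOperators
open Real


lemma hoeffding_core (p : ℝ) (hp0 : 0 ≤ p) (hp1 : p ≤ 1) (h : ℝ) :
    -(p*h) + Real.log (1 - p + p * Real.exp h) ≤ h^2/8 := by
  have hD : ∀ s : ℝ, 0 < 1 - p + p * Real.exp s := by
    intro s
    rcases lt_or_eq_of_le hp1 with hp | hp
    · nlinarith [Real.exp_pos s]
    · rw [hp]; simpa using Real.exp_pos s
  set F' : ℝ → ℝ := fun s => -p + p * Real.exp s / (1 - p + p * Real.exp s) with hF'
  have hdD : ∀ s : ℝ, HasDerivAt (fun s => 1 - p + p * Real.exp s) (p * Real.exp s) s := by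
    intro s
    simpa using ((Real.hasDerivAt_exp s).const_mul p).const_add (1-p)
  have hdF : ∀ s : ℝ, HasDerivAt (fun s => -(p*s) + Real.log (1 - p + p * Real.exp s)) (F' s) s := by
    intro s
    have h1 : HasDerivAt (fun s : ℝ => -(p*s)) (-p) s := by
      have e : (fun s : ℝ => -(p*s)) = fun s => s * (-p) := by funext y; ring
      rw [e]; exact hasDerivAt_mul_const (-p)
    exact h1.add ((hdD s).log (ne_of_gt (hD s)))
  have hdF' : ∀ s : ℝ, HasDerivAt F' (p * Real.exp s * (1-p) / (1 - p + p * Real.exp s)^2) s := by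
    intro s
    have h2 : HasDerivAt (fun s => p * Real.exp s / (1 - p + p * Real.exp s))
        ((p * Real.exp s * (1 - p + p * Real.exp s) - p * Real.exp s * (p * Real.exp s)) / (1 - p + p * Real.exp s)^2) s :=
      ((Real.hasDerivAt_exp s).const_mul p).div (hdD s) (ne_of_gt (hD s))
    have h3 : (p * Real.exp s * (1 - p + p * Real.exp s) - p * Real.exp s * (p * Real.exp s)) / (1 - p + p * Real.exp s)^2
        = p * Real.exp s * (1-p) / (1 - p + p * Real.exp s)^2 := by ring
    rw [h3] at h2
    exact h2.const_add (-p)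
  have hbound : ∀ s : ℝ, p * Real.exp s * (1-p) / (1 - p + p * Real.exp s)^2 ≤ 1/4 := by
    intro s
    rw [div_le_iff₀ (pow_pos (hD s) 2)]
    nlinarith [sq_nonneg ((1-p) - p * Real.exp s)]
  have hF'0 : F' 0 = 0 := by simp [hF']
  have hg : Monotone (fun s => s/4 - F' s) := by
    apply monotone_of_deriv_nonneg
    · exact fun s => ((differentiable_id.div_const 4) s).sub (hdF' s).differentiableAt
    · intro s
      have hd : HasDerivAt (fun s => s/4 - F' s) (1/4 - (p * Real.exp s * (1-p) / (1 - p + p * Real.exp s)^2)) s :=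
        ((hasDerivAt_id s).div_const 4).sub (hdF' s)
      rw [hd.deriv]
      linarith [hbound s]
  have hkey1 : ∀ s : ℝ, 0 ≤ s → F' s ≤ s/4 := by
    intro s hs
    have := hg (show (0:ℝ) ≤ s from hs)
    simp only [hF'0] at this; simp at this ⊢; linarith
  have hkey2 : ∀ s : ℝ, s ≤ 0 → s/4 ≤ F' s := by
    intro s hs
    have := hg (show s ≤ (0:ℝ) from hs)
    simp only [hF'0] at this; simp at this ⊢; linarith
  set G : ℝ → ℝ := fun s => s^2/8 - (-(p*s) + Real.log (1 - p + p * Real.exp s)) with hG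
  have hdG : ∀ s : ℝ, HasDerivAt G (s/4 - F' s) s := by
    intro s
    have h1 : HasDerivAt (fun s : ℝ => s^2/8) (s/4) s := by
      have := (hasDerivAt_pow 2 s).div_const 8
      refine this.congr_deriv ?_
      norm_num; ring
    exact h1.sub (hdF s)
  have hGdiff : Differentiable ℝ G := fun s => (hdG s).differentiableAt
  have hG0 : G 0 = 0 := by simp [hG]
  have hfinal : 0 ≤ G h := by
    rcases le_or_gt 0 h with hh | hh
    · have hmono : MonotoneOn G (Set.Ici 0) := by
        apply monotoneOn_of_deriv_nonneg (convex_Ici 0) hGdiff.continuous.continuousOn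
        · intro s _; exact (hGdiff s).differentiableWithinAt
        · intro s hs
          rw [(hdG s).deriv]
          rw [interior_Ici] at hs
          linarith [hkey1 s (le_of_lt hs)]
      have := hmono (Set.mem_Ici.2 le_rfl) (Set.mem_Ici.2 hh) hh
      rwa [hG0] at this
    · have hanti : AntitoneOn G (Set.Iic 0) := by
        apply antitoneOn_of_deriv_nonpos (convex_Iic 0) hGdiff.continuous.continuousOn
        · intro s _; exact (hGdiff s).differentiableWithinAt
        · intro s hs
          rw [(hdG s).deriv]
          rw [interior_Iic] at hs
          linarith [hkey2 s (le_of_lt hs)]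
      have := hanti (Set.mem_Iic.2 (le_of_lt hh)) (Set.mem_Iic.2 le_rfl) (le_of_lt hh)
      rwa [hG0] at this
  simp only [hG] at hfinal
  linarith



lemma hoeffding_lemma {Ω : Type*} [MeasurableSpace Ω] (μ : Measure Ω) [IsProbabilityMeasure μ]
    {Y : Ω → ℝ} (hmeas : AEStronglyMeasurable Y μ) {a b : ℝ}
    (hab : ∀ ω, Y ω ∈ Set.Icc a b) (hmean : ∫ ω, Y ω ∂μ = 0) (t : ℝ) :
    ∫ ω, Real.exp (t * Y ω) ∂μ ≤ Real.exp (t^2 * (b-a)^2 / 8) := by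
  have hΩ : Nonempty Ω := by
    by_contra hc
    rw [not_nonempty_iff] at hc
    have h1 := measure_univ (μ := μ)
    rw [Set.univ_eq_empty_iff.2 hc, measure_empty] at h1
    exact zero_ne_one h1
  obtain ⟨ω₀⟩ := hΩ
  have hab' : a ≤ b := le_trans (hab ω₀).1 (hab ω₀).2
  have hYabs : ∀ ω, |Y ω| ≤ max |a| |b| := fun ω => abs_le.2
    ⟨le_trans (le_trans (by simp) (neg_abs_le a)) (hab ω).1,
     le_trans (hab ω).2 (le_trans (le_abs_self b) (le_max_right _ _))⟩
  have hYint : Integrable Y μ :=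
    (integrable_const (max |a| |b|)).mono' hmeas
      (ae_of_all _ fun ω => by rw [Real.norm_eq_abs]; exact hYabs ω)
  have ha0 : a ≤ 0 := by
    have : ∫ _ω, a ∂μ ≤ ∫ ω, Y ω ∂μ := integral_mono (integrable_const a) hYint (fun ω => (hab ω).1)
    simpa [hmean] using this
  have hb0 : 0 ≤ b := by
    have : ∫ ω, Y ω ∂μ ≤ ∫ _ω, b ∂μ := integral_mono hYint (integrable_const b) (fun ω => (hab ω).2)
    simpa [hmean] using this
  rcases eq_or_lt_of_le hab' with heq | hlt
  · have ha : a = 0 := le_antisymm ha0 (heq ▸ hb0)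
    have hb : b = 0 := heq ▸ ha
    have hY0 : ∀ ω, Y ω = 0 := fun ω =>
      le_antisymm (hb ▸ (hab ω).2) (ha ▸ (hab ω).1)
    simp only [hY0, mul_zero, Real.exp_zero, integral_const, measure_univ]
    simp only [ENNReal.toReal_one, probReal_univ, smul_eq_mul, mul_one, one_mul]
    calc (1:ℝ) = Real.exp 0 := Real.exp_zero.symm
      _ ≤ _ := Real.exp_le_exp.2 (by positivity)
  · have hba : 0 < b - a := sub_pos.2 hlt
    have hne : b - a ≠ 0 := ne_of_gt hba
    set p : ℝ := -a/(b-a) with hp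
    have hna : 0 ≤ -a := neg_nonneg.2 ha0
    have hp0 : 0 ≤ p := div_nonneg hna (le_of_lt hba)
    have hp1 : p ≤ 1 := by
      rw [hp, div_le_one hba]; linarith
    set c1 : ℝ := (b * Real.exp (t*a) - a * Real.exp (t*b))/(b-a) with hc1
    set c2 : ℝ := (Real.exp (t*b) - Real.exp (t*a))/(b-a) with hc2
    have hpt : ∀ ω, Real.exp (t * Y ω) ≤ c1 + c2 * Y ω := by
      intro ω
      obtain ⟨h1, h2⟩ := hab ω
      set x := Y ω
      have hw1 : (0:ℝ) ≤ (b-x)/(b-a) := div_nonneg (by linarith) (le_of_lt hba)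
      have hw2 : (0:ℝ) ≤ (x-a)/(b-a) := div_nonneg (by linarith) (le_of_lt hba)
      have hsum : (b-x)/(b-a) + (x-a)/(b-a) = 1 := by field_simp; ring
      have hconv := convexOn_exp.2 (Set.mem_univ (t*a)) (Set.mem_univ (t*b)) hw1 hw2 hsum
      have harg : ((b-x)/(b-a)) • (t*a) + ((x-a)/(b-a)) • (t*b) = t * x := by
        simp only [smul_eq_mul]
        field_simp
        ring
      rw [harg] at hconv
      calc Real.exp (t*x) ≤ ((b-x)/(b-a)) • Real.exp (t*a) + ((x-a)/(b-a)) • Real.exp (t*b) := hconv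
        _ = c1 + c2 * x := by
            simp only [smul_eq_mul, hc1, hc2]
            field_simp
            ring
    have hint : ∫ ω, Real.exp (t * Y ω) ∂μ ≤ c1 := by
      have hrhs : Integrable (fun ω => c1 + c2 * Y ω) μ :=
        (integrable_const c1).add (hYint.const_mul c2)
      have hlhs : Integrable (fun ω => Real.exp (t * Y ω)) μ := by
        refine (integrable_const (Real.exp (|t| * max |a| |b|))).mono'
          (Real.continuous_exp.comp_aestronglyMeasurable (hmeas.const_mul t)) (ae_of_all _ fun ω => ?_)
        rw [Real.norm_eq_abs, abs_of_pos (Real.exp_pos _)]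
        apply Real.exp_le_exp.2
        calc t * Y ω ≤ |t * Y ω| := le_abs_self _
          _ = |t| * |Y ω| := abs_mul _ _
          _ ≤ |t| * max |a| |b| := mul_le_mul_of_nonneg_left (hYabs ω) (abs_nonneg t)
      calc ∫ ω, Real.exp (t * Y ω) ∂μ ≤ ∫ ω, (c1 + c2 * Y ω) ∂μ := integral_mono hlhs hrhs hpt
        _ = c1 + c2 * ∫ ω, Y ω ∂μ := by
            rw [integral_add (integrable_const c1) (hYint.const_mul c2), integral_const,
              integral_const_mul]
            simp
        _ = c1 := by rw [hmean]; ring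
    have hc1eq : c1 = Real.exp (-(p * (t*(b-a))) + Real.log (1 - p + p * Real.exp (t*(b-a)))) := by
      have hDpos : 0 < 1 - p + p * Real.exp (t*(b-a)) := by
        rcases lt_or_eq_of_le hp1 with hpp | hpp
        · nlinarith [Real.exp_pos (t*(b-a))]
        · rw [hpp]; simpa using Real.exp_pos (t*(b-a))
      rw [Real.exp_add, Real.exp_log hDpos]
      have h1 : -(p * (t*(b-a))) = t * a := by rw [hp]; field_simp
      rw [h1, hc1]
      have h2 : Real.exp (t*b) = Real.exp (t*a) * Real.exp (t*(b-a)) := by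
        rw [← Real.exp_add]; ring_nf
      rw [h2, hp]
      field_simp
      ring
    calc ∫ ω, Real.exp (t * Y ω) ∂μ ≤ c1 := hint
      _ ≤ Real.exp ((t*(b-a))^2/8) := by
          rw [hc1eq]
          exact Real.exp_le_exp.2 (hoeffding_core p hp0 hp1 (t*(b-a)))
      _ = Real.exp (t^2 * (b-a)^2/8) := by rw [mul_pow]



/-- bounded measurable implies integrable on a finite measure -/
lemma integrable_of_bdd {α : Type*} [MeasurableSpace α] {μ : Measure α} [IsFiniteMeasure μ]
    {h : α → ℝ} (hm : AEStronglyMeasurable h μ) {C : ℝ} (hC : ∀ x, |h x| ≤ C) :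
    Integrable h μ :=
  (integrable_const C).mono' hm (ae_of_all _ fun x => by rw [Real.norm_eq_abs]; exact hC x)

lemma mcdiarmid_mgf {X : Type*} [MeasurableSpace X] (Ps : Measure X) [IsProbabilityMeasure Ps]
    (c K t : ℝ) :
    ∀ (n : ℕ) (f : (Fin n → X) → ℝ), Measurable f → (∀ x, |f x| ≤ K) →
    (∀ (x : Fin n → X) (i : Fin n) (y : X), f x - f (Function.update x i y) ≤ c) →
    ∫ x, Real.exp (t * (f x - ∫ x', f x' ∂(Measure.pi fun _ : Fin n => Ps)))
        ∂(Measure.pi fun _ : Fin n => Ps)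
      ≤ Real.exp (n * (t^2 * c^2 / 8)) := by
  have hX : Nonempty X := by
    by_contra hc
    rw [not_nonempty_iff] at hc
    have h1 := measure_univ (μ := Ps)
    rw [Set.univ_eq_empty_iff.2 hc, measure_empty] at h1
    exact zero_ne_one h1
  intro n
  induction n with
  | zero =>
    intro f hf hK hdiff
    have hconst : ∀ x y : Fin 0 → X, f x = f y := fun x y => congrArg f (Subsingleton.elim x y)
    set y0 : Fin 0 → X := fun i => i.elim0 with hy0
    have h1 : (∫ x', f x' ∂(Measure.pi fun _ : Fin 0 => Ps)) = f y0 := by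
      have : (fun x' : Fin 0 → X => f x') = fun _ => f y0 := funext fun x => hconst x y0
      rw [this, integral_const]; simp
    have h2 : (fun x : Fin 0 → X => Real.exp (t * (f x - ∫ x', f x' ∂(Measure.pi fun _ : Fin 0 => Ps))))
        = fun _ => (1:ℝ) := by
      funext x
      rw [h1, hconst x y0]
      simp
    rw [h2, integral_const]
    simp
  | succ n ih =>
    intro f hf hK hdiff
    set Pn : Measure (Fin n → X) := Measure.pi fun _ => Ps with hPn
    set PN : Measure (Fin (n+1) → X) := Measure.pi fun _ => Ps with hPN
    set e := MeasurableEquiv.piFinSuccAbove (fun _ : Fin (n+1) => X) 0 with he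
    have hMP : MeasurePreserving e PN (Ps.prod Pn) :=
      measurePreserving_piFinSuccAbove (fun _ : Fin (n+1) => Ps) 0
    have hsymm : ∀ q : X × (Fin n → X), e.symm q = Fin.cons q.1 q.2 := by
      intro q
      simp [he, MeasurableEquiv.piFinSuccAbove_symm_apply, Fin.insertNthEquiv,
        Fin.insertNth_zero']
    have key : ∀ G : (Fin (n+1) → X) → ℝ,
        ∫ x, G x ∂PN = ∫ q : X × (Fin n → X), G (Fin.cons q.1 q.2) ∂(Ps.prod Pn) := by
      intro G
      rw [← (MeasurePreserving.symm e hMP).integral_comp (MeasurableEquiv.measurableEmbedding e.symm) G]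
      exact integral_congr_ae (ae_of_all _ fun q => by simp only []; rw [hsymm q])
    -- the function F on the product
    have hconsm : Measurable fun q : X × (Fin n → X) => (Fin.cons q.1 q.2 : Fin (n+1) → X) := by
      have : (fun q : X × (Fin n → X) => (Fin.cons q.1 q.2 : Fin (n+1) → X)) = fun q => e.symm q := by
        funext q; rw [hsymm q]
      rw [this]; exact e.symm.measurable
    set F : X × (Fin n → X) → ℝ := fun q => f (Fin.cons q.1 q.2) with hF
    have hFmeas : Measurable F := hf.comp hconsm
    have hFK : ∀ q, |F q| ≤ K := fun q => hK _
    have hconsym : ∀ rest : Fin n → X, Measurable fun y : X => (Fin.cons y rest : Fin (n+1) → X) := by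
      intro rest
      rw [measurable_pi_iff]
      intro j
      refine Fin.cases ?_ ?_ j
      · simpa using measurable_id'
      · intro i; simpa using measurable_const
    set g : (Fin n → X) → ℝ := fun rest => ∫ y, f (Fin.cons y rest) ∂Ps with hg
    have hgsm : StronglyMeasurable g := by
      have : g = fun rest => ∫ y, F (y, rest) ∂Ps := rfl
      rw [this]
      exact hFmeas.stronglyMeasurable.integral_prod_left'
    have hgK : ∀ rest, |g rest| ≤ K := by
      intro rest
      rw [← Real.norm_eq_abs]
      calc ‖∫ y, f (Fin.cons y rest) ∂Ps‖ ≤ K * (Ps Set.univ).toReal :=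
        norm_integral_le_of_norm_le_const (ae_of_all _ fun y => by
          rw [Real.norm_eq_abs]; exact hK _)
        _ = K := by simp
    have hgdiff : ∀ (x : Fin n → X) (i : Fin n) (y : X), g x - g (Function.update x i y) ≤ c := by
      intro x i y
      have hint1 : Integrable (fun y' => f (Fin.cons y' x)) Ps :=
        integrable_of_bdd ((hf.comp (hconsym x)).aestronglyMeasurable) (fun y' => hK _)
      have hint2 : Integrable (fun y' => f (Fin.cons y' (Function.update x i y))) Ps :=
        integrable_of_bdd ((hf.comp (hconsym _)).aestronglyMeasurable) (fun y' => hK _)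
      have : g x - g (Function.update x i y)
          = ∫ y', (f (Fin.cons y' x) - f (Fin.cons y' (Function.update x i y))) ∂Ps := by
        rw [integral_sub hint1 hint2]
      rw [this]
      calc ∫ y', (f (Fin.cons y' x) - f (Fin.cons y' (Function.update x i y))) ∂Ps
          ≤ ∫ _y', c ∂Ps := by
            apply integral_mono (hint1.sub hint2) (integrable_const c)
            intro y'
            have := hdiff (Fin.cons y' x) i.succ y
            rwa [← Fin.cons_update] at this
        _ = c := by simp
    -- expectation identity
    set Ef : ℝ := ∫ x', f x' ∂PN with hEf
    have hEfg : Ef = ∫ rest, g rest ∂Pn := by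
      rw [hEf, key f]
      exact integral_prod_symm F (integrable_of_bdd hFmeas.aestronglyMeasurable hFK)
    have hEfK : |Ef| ≤ K := by
      rw [hEf, ← Real.norm_eq_abs]
      calc ‖∫ x', f x' ∂PN‖ ≤ K * (PN Set.univ).toReal :=
        norm_integral_le_of_norm_le_const (ae_of_all _ fun x => by
          rw [Real.norm_eq_abs]; exact hK _)
        _ = K := by simp
    -- bound on c: c ≥ 0 automatic
    have hc0 : 0 ≤ c := by
      obtain ⟨x0⟩ : Nonempty (Fin (n+1) → X) := ⟨fun _ => Classical.arbitrary X⟩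
      have := hdiff x0 0 (x0 0)
      simpa [Function.update_eq_self] using this
    -- main chain
    have hexp2K : ∀ s : ℝ, |s| ≤ 2*K → Real.exp (t * s) ≤ Real.exp (|t| * (2*K)) := by
      intro s hs
      apply Real.exp_le_exp.2
      calc t * s ≤ |t * s| := le_abs_self _
        _ = |t| * |s| := abs_mul _ _
        _ ≤ |t| * (2*K) := mul_le_mul_of_nonneg_left hs (abs_nonneg t)
    have hsub2K : ∀ q, |F q - Ef| ≤ 2*K := fun q => by
      have h1 := abs_le.1 (hFK q)
      have h2 := abs_le.1 hEfK
      rw [abs_le]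
      constructor <;> [linarith [h1.1, h2.2]; linarith [h1.2, h2.1]]
    have hgsub2K : ∀ rest, |g rest - Ef| ≤ 2*K := fun rest => by
      have h1 := abs_le.1 (hgK rest)
      have h2 := abs_le.1 hEfK
      rw [abs_le]
      constructor <;> [linarith [h1.1, h2.2]; linarith [h1.2, h2.1]]
    -- infimum over the first coordinate
    set A : (Fin n → X) → ℝ := fun rest => ⨅ y : X, f (Fin.cons y rest) with hA
    have hbdd : ∀ rest, BddBelow (Set.range fun y : X => f (Fin.cons y rest)) := by
      intro rest
      refine ⟨-K, ?_⟩
      rintro _ ⟨y, rfl⟩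
      linarith [(abs_le.1 (hK (Fin.cons y rest))).1]
    have hA_le : ∀ rest (y : X), A rest ≤ f (Fin.cons y rest) := fun rest y => ciInf_le (hbdd rest) y
    have hle_A : ∀ rest (y : X), f (Fin.cons y rest) ≤ A rest + c := by
      intro rest y
      have h1 : f (Fin.cons y rest) - c ≤ A rest := by
        apply le_ciInf
        intro y'
        have h2 := hdiff (Fin.cons y rest) 0 y'
        rw [Fin.update_cons_zero] at h2
        linarith
      linarith
    -- inner Hoeffding bound
    have hinner : ∀ rest, ∫ y, Real.exp (t * (F (y, rest) - Ef)) ∂Ps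
        ≤ Real.exp (t^2 * c^2 / 8) * Real.exp (t * (g rest - Ef)) := by
      intro rest
      have hFymeas : Measurable (fun y => f (Fin.cons y rest)) := hf.comp (hconsym rest)
      have hFyint : Integrable (fun y => f (Fin.cons y rest)) Ps :=
        integrable_of_bdd hFymeas.aestronglyMeasurable (fun y => hK _)
      have hmean : ∫ y, (f (Fin.cons y rest) - g rest) ∂Ps = 0 := by
        rw [integral_sub hFyint (integrable_const _), integral_const]
        simp [hg]
      have hH := hoeffding_lemma Ps (Y := fun y => f (Fin.cons y rest) - g rest)
        ((hFymeas.sub measurable_const).aestronglyMeasurable)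
        (a := A rest - g rest) (b := A rest + c - g rest)
        (fun y => ⟨by linarith [hA_le rest y], by linarith [hle_A rest y]⟩)
        hmean t
      have hsplit : ∀ y : X, Real.exp (t * (F (y,rest) - Ef))
          = Real.exp (t * (g rest - Ef)) * Real.exp (t * (f (Fin.cons y rest) - g rest)) := by
        intro y
        rw [← Real.exp_add]
        congr 1
        simp only [hF]
        ring
      calc ∫ y, Real.exp (t * (F (y, rest) - Ef)) ∂Ps
          = ∫ y, Real.exp (t * (g rest - Ef)) * Real.exp (t * (f (Fin.cons y rest) - g rest)) ∂Ps :=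
            integral_congr_ae (ae_of_all _ fun y => hsplit y)
        _ = Real.exp (t * (g rest - Ef)) * ∫ y, Real.exp (t * (f (Fin.cons y rest) - g rest)) ∂Ps :=
            integral_const_mul _ _
        _ ≤ Real.exp (t * (g rest - Ef)) * Real.exp (t^2 * c^2/8) := by
            apply mul_le_mul_of_nonneg_left _ (Real.exp_pos _).le
            have hba : ((A rest + c - g rest) - (A rest - g rest)) = c := by ring
            calc ∫ y, Real.exp (t * (f (Fin.cons y rest) - g rest)) ∂Ps
                ≤ Real.exp (t^2 * ((A rest + c - g rest) - (A rest - g rest))^2/8) := hH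
              _ = Real.exp (t^2 * c^2/8) := by rw [hba]
        _ = Real.exp (t^2 * c^2/8) * Real.exp (t * (g rest - Ef)) := mul_comm _ _
    -- integrability on the product and on Pn
    have hprodmeas : Measurable (fun q : X × (Fin n → X) => Real.exp (t * (F q - Ef))) :=
      Real.measurable_exp.comp ((hFmeas.sub measurable_const).const_mul t)
    have hFexp_int : Integrable (fun q : X × (Fin n → X) => Real.exp (t * (F q - Ef))) (Ps.prod Pn) := by
      refine integrable_of_bdd hprodmeas.aestronglyMeasurable (C := Real.exp (|t| * (2*K))) ?_
      intro q
      rw [abs_of_pos (Real.exp_pos _)]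
      exact hexp2K _ (hsub2K q)
    have houter_sm : StronglyMeasurable (fun rest => ∫ y, Real.exp (t * (F (y, rest) - Ef)) ∂Ps) :=
      hprodmeas.stronglyMeasurable.integral_prod_left'
    have hint1' : Integrable (fun rest => ∫ y, Real.exp (t * (F (y, rest) - Ef)) ∂Ps) Pn := by
      refine integrable_of_bdd houter_sm.aestronglyMeasurable (C := Real.exp (|t| * (2*K))) ?_
      intro rest
      rw [← Real.norm_eq_abs]
      calc ‖∫ y, Real.exp (t * (F (y, rest) - Ef)) ∂Ps‖
          ≤ Real.exp (|t| * (2*K)) * (Ps Set.univ).toReal :=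
            norm_integral_le_of_norm_le_const (ae_of_all _ fun y => by
              rw [Real.norm_eq_abs, abs_of_pos (Real.exp_pos _)]
              exact hexp2K _ (hsub2K (y, rest)))
        _ = Real.exp (|t| * (2*K)) := by simp
    have hgexp_meas : Measurable (fun rest => Real.exp (t * (g rest - Ef))) :=
      Real.measurable_exp.comp ((hgsm.measurable.sub measurable_const).const_mul t)
    have hint2' : Integrable (fun rest => Real.exp (t^2 * c^2/8) * Real.exp (t * (g rest - Ef))) Pn := by
      refine integrable_of_bdd (hgexp_meas.const_mul _).aestronglyMeasurable
        (C := Real.exp (t^2*c^2/8) * Real.exp (|t| * (2*K))) ?_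
      intro rest
      rw [abs_mul, abs_of_pos (Real.exp_pos _), abs_of_pos (Real.exp_pos _)]
      exact mul_le_mul_of_nonneg_left (hexp2K _ (hgsub2K rest)) (Real.exp_pos _).le
    calc ∫ x, Real.exp (t * (f x - Ef)) ∂PN
        = ∫ q : X × (Fin n → X), Real.exp (t * (F q - Ef)) ∂(Ps.prod Pn) :=
          key (fun x => Real.exp (t * (f x - Ef)))
      _ = ∫ rest, ∫ y, Real.exp (t * (F (y, rest) - Ef)) ∂Ps ∂Pn :=
          integral_prod_symm _ hFexp_int
      _ ≤ ∫ rest, Real.exp (t^2 * c^2/8) * Real.exp (t * (g rest - Ef)) ∂Pn :=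
          integral_mono hint1' hint2' hinner
      _ = Real.exp (t^2*c^2/8) * ∫ rest, Real.exp (t * (g rest - Ef)) ∂Pn :=
          integral_const_mul _ _
      _ ≤ Real.exp (t^2*c^2/8) * Real.exp (n * (t^2*c^2/8)) := by
          apply mul_le_mul_of_nonneg_left _ (Real.exp_pos _).le
          have hih := ih g hgsm.measurable hgK hgdiff
          rwa [← hEfg] at hih
      _ = Real.exp ((n+1 : ℕ) * (t^2*c^2/8)) := by
          rw [← Real.exp_add]
          congr 1
          push_cast
          ring

lemma sum_sq_pi {X : Type*} [MeasurableSpace X]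
    {H : Type*} [NormedAddCommGroup H] [InnerProductSpace ℝ H] [CompleteSpace H]
    (Ps : Measure X) [IsProbabilityMeasure Ps]
    (Y : X → H) (hY : StronglyMeasurable Y) (R : ℝ) (hR : ∀ x, ‖Y x‖ ≤ R)
    (hmean : ∫ x, Y x ∂Ps = 0) :
    ∀ n : ℕ, ∫ xs, ‖∑ i : Fin n, Y (xs i)‖^2 ∂(Measure.pi fun _ : Fin n => Ps)
      = n * ∫ x, ‖Y x‖^2 ∂Ps := by
  have hX : Nonempty X := by
    by_contra hc
    rw [not_nonempty_iff] at hc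
    have h1 := measure_univ (μ := Ps)
    rw [Set.univ_eq_empty_iff.2 hc, measure_empty] at h1
    exact zero_ne_one h1
  have hR0 : 0 ≤ R := le_trans (norm_nonneg _) (hR (Classical.arbitrary X))
  have hSsm : ∀ m : ℕ, StronglyMeasurable (fun xs : Fin m → X => ∑ i, Y (xs i)) := by
    intro m
    apply Finset.stronglyMeasurable_fun_sum
    intro i _
    exact hY.comp_measurable (measurable_pi_apply i)
  have hSbd : ∀ (m : ℕ) (xs : Fin m → X), ‖∑ i, Y (xs i)‖ ≤ m * R := by
    intro m xs
    calc ‖∑ i, Y (xs i)‖ ≤ ∑ i : Fin m, ‖Y (xs i)‖ := norm_sum_le _ _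
      _ ≤ ∑ _i : Fin m, R := Finset.sum_le_sum fun i _ => hR _
      _ = m * R := by simp [mul_comm]
  have hYint : Integrable Y Ps := by
    refine (integrable_const R).mono' hY.aestronglyMeasurable (ae_of_all _ fun x => hR x)
  intro n
  induction n with
  | zero => simp
  | succ n ih =>
    set Pn : Measure (Fin n → X) := Measure.pi fun _ => Ps with hPn
    set PN : Measure (Fin (n+1) → X) := Measure.pi fun _ => Ps with hPN
    set e := MeasurableEquiv.piFinSuccAbove (fun _ : Fin (n+1) => X) 0 with he
    have hMP : MeasurePreserving e PN (Ps.prod Pn) :=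
      measurePreserving_piFinSuccAbove (fun _ : Fin (n+1) => Ps) 0
    have hsymm : ∀ q : X × (Fin n → X), e.symm q = Fin.cons q.1 q.2 := by
      intro q
      simp [he, MeasurableEquiv.piFinSuccAbove_symm_apply, Fin.insertNthEquiv,
        Fin.insertNth_zero']
    have key : ∀ G : (Fin (n+1) → X) → ℝ,
        ∫ x, G x ∂PN = ∫ q : X × (Fin n → X), G (Fin.cons q.1 q.2) ∂(Ps.prod Pn) := by
      intro G
      rw [← (MeasurePreserving.symm e hMP).integral_comp
        (MeasurableEquiv.measurableEmbedding e.symm) G]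
      exact integral_congr_ae (ae_of_all _ fun q => by simp only []; rw [hsymm q])
    set S : (Fin n → X) → H := fun rest => ∑ i, Y (rest i) with hS
    have hsum_cons : ∀ (y : X) (rest : Fin n → X),
        ∑ i : Fin (n+1), Y ((Fin.cons y rest : Fin (n+1) → X) i) = Y y + S rest := by
      intro y rest
      rw [Fin.sum_univ_succ]
      simp [hS]
    -- expand the square
    have hexpand : ∀ (y : X) (rest : Fin n → X),
        ‖Y y + S rest‖^2 = ‖Y y‖^2 + 2 * ⟪Y y, S rest⟫ + ‖S rest‖^2 := fun y rest =>
      norm_add_sq_real _ _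
    -- integrability on product
    have hconsm : Measurable fun q : X × (Fin n → X) => (Fin.cons q.1 q.2 : Fin (n+1) → X) := by
      have h2 : (fun q : X × (Fin n → X) => (Fin.cons q.1 q.2 : Fin (n+1) → X)) = fun q => e.symm q := by
        funext q; rw [hsymm q]
      rw [h2]; exact e.symm.measurable
    have hGm : Measurable fun q : X × (Fin n → X) => ‖∑ i : Fin (n+1), Y ((Fin.cons q.1 q.2 : Fin (n+1) → X) i)‖^2 := by
      have := ((hSsm (n+1)).comp_measurable hconsm).norm.measurable
      exact this.pow_const 2
    have hGint : Integrable (fun q : X × (Fin n → X) =>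
        ‖∑ i : Fin (n+1), Y ((Fin.cons q.1 q.2 : Fin (n+1) → X) i)‖^2) (Ps.prod Pn) := by
      refine integrable_of_bdd hGm.aestronglyMeasurable (C := ((n+1) * R)^2) fun q => ?_
      rw [abs_of_nonneg (by positivity)]
      have := hSbd (n+1) (Fin.cons q.1 q.2)
      calc ‖∑ i : Fin (n+1), Y ((Fin.cons q.1 q.2 : Fin (n+1) → X) i)‖^2
          ≤ ((n+1 : ℕ) * R)^2 := by
            apply sq_le_sq'
            · linarith [norm_nonneg (∑ i : Fin (n+1), Y ((Fin.cons q.1 q.2 : Fin (n+1) → X) i)), mul_nonneg (Nat.cast_nonneg (n+1) : (0:ℝ) ≤ (n+1:ℕ)) hR0]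
            · exact this
        _ = ((n+1) * R)^2 := by push_cast; ring
    -- inner integral over y for fixed rest
    have hinner : ∀ rest : Fin n → X,
        ∫ y, ‖Y y + S rest‖^2 ∂Ps = (∫ x, ‖Y x‖^2 ∂Ps) + ‖S rest‖^2 := by
      intro rest
      have hYsq : Integrable (fun y => ‖Y y‖^2) Ps := by
        refine integrable_of_bdd (hY.norm.measurable.pow_const 2).aestronglyMeasurable
          (C := R^2) fun y => ?_
        rw [abs_of_nonneg (by positivity)]
        apply sq_le_sq' (by linarith [norm_nonneg (Y y)]) (hR y)
      have hinmeas : AEStronglyMeasurable (fun y => ⟪Y y, S rest⟫) Ps := by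
        exact (hY.inner stronglyMeasurable_const).aestronglyMeasurable
      have hinint : Integrable (fun y => ⟪Y y, S rest⟫) Ps := by
        refine integrable_of_bdd hinmeas (C := R * ‖S rest‖) fun y => ?_
        calc |⟪Y y, S rest⟫| ≤ ‖Y y‖ * ‖S rest‖ := abs_real_inner_le_norm _ _
          _ ≤ R * ‖S rest‖ := mul_le_mul_of_nonneg_right (hR y) (norm_nonneg _)
      have hinzero : ∫ y, ⟪Y y, S rest⟫ ∂Ps = 0 := by
        have h3 : ∀ y, ⟪Y y, S rest⟫ = ⟪S rest, Y y⟫ := fun y => real_inner_comm _ _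
        simp_rw [h3]
        rw [integral_inner hYint, hmean, inner_zero_right]
      calc ∫ y, ‖Y y + S rest‖^2 ∂Ps
          = ∫ y, (‖Y y‖^2 + 2 * ⟪Y y, S rest⟫ + ‖S rest‖^2) ∂Ps :=
            integral_congr_ae (ae_of_all _ fun y => hexpand y rest)
        _ = (∫ x, ‖Y x‖^2 ∂Ps) + ‖S rest‖^2 := by
            have h4 : Integrable (fun y => ‖Y y‖^2 + 2 * ⟪Y y, S rest⟫) Ps :=
              hYsq.add (hinint.const_mul 2)
            rw [integral_add h4 (integrable_const _),
              integral_add hYsq (hinint.const_mul 2), integral_const_mul, hinzero, integral_const]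
            simp
    -- outer
    calc ∫ xs, ‖∑ i : Fin (n+1), Y (xs i)‖^2 ∂PN
        = ∫ q : X × (Fin n → X), ‖∑ i : Fin (n+1), Y ((Fin.cons q.1 q.2 : Fin (n+1) → X) i)‖^2 ∂(Ps.prod Pn) :=
          key _
      _ = ∫ rest, ∫ y, ‖∑ i : Fin (n+1), Y ((Fin.cons y rest : Fin (n+1) → X) i)‖^2 ∂Ps ∂Pn :=
          integral_prod_symm _ hGint
      _ = ∫ rest, ((∫ x, ‖Y x‖^2 ∂Ps) + ‖S rest‖^2) ∂Pn := by
          refine integral_congr_ae (ae_of_all _ fun rest => ?_)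
          show (∫ y, ‖∑ i : Fin (n+1), Y ((Fin.cons y rest : Fin (n+1) → X) i)‖^2 ∂Ps)
            = (∫ x, ‖Y x‖^2 ∂Ps) + ‖S rest‖^2
          rw [← hinner rest]
          refine integral_congr_ae (ae_of_all _ fun y => ?_)
          show ‖∑ i : Fin (n+1), Y ((Fin.cons y rest : Fin (n+1) → X) i)‖^2 = ‖Y y + S rest‖^2
          rw [hsum_cons y rest]
      _ = (∫ x, ‖Y x‖^2 ∂Ps) + ∫ rest, ‖S rest‖^2 ∂Pn := by
          rw [integral_add (integrable_const _) ?hint]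
          · rw [integral_const]; simp
          case hint =>
            refine integrable_of_bdd ((hSsm n).norm.measurable.pow_const 2).aestronglyMeasurable
              (C := (n*R)^2) fun rest => ?_
            rw [abs_of_nonneg (by positivity)]
            exact sq_le_sq' (by linarith [norm_nonneg (S rest), mul_nonneg (Nat.cast_nonneg n : (0:ℝ) ≤ (n:ℕ)) hR0]) (hSbd n rest)
      _ = (n+1 : ℕ) * ∫ x, ‖Y x‖^2 ∂Ps := by
          rw [ih]
          push_cast
          ring

/-- Lemma 1: with probability at least `1 − δ` over an i.i.d. sample of size `n_s`
from `P_s`, the weighted empirical embedding mean is within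
`B √(M/n_s) (1 + √(2 log(1/δ)))` of the population weighted embedding mean `μ_{t'}`. -/
theorem weighted_embedding_mean_concentration
    {X : Type*} [MeasurableSpace X]
    {H : Type*} [NormedAddCommGroup H] [InnerProductSpace ℝ H] [CompleteSpace H]
    (M B : ℝ) (hM : 0 < M) (hB : 0 < B)
    (φ : X → H) (hφsm : StronglyMeasurable φ) (hφ : ∀ x, ‖φ x‖ ≤ Real.sqrt M)
    (Ps : Measure X) [IsProbabilityMeasure Ps]
    (w : X → ℝ) (hwmeas : Measurable w) (hw : ∀ x, 0 ≤ w x ∧ w x ≤ B)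
    (hint : Integrable (fun x => w x • φ x) Ps)
    (ns : ℕ) (hns : 0 < ns)
    (μt' : H) (hμt' : μt' = ∫ x, w x • φ x ∂Ps)
    (δ : ℝ) (hδ : δ ∈ Set.Ioo (0 : ℝ) 1) :
    (Measure.pi fun _ : Fin ns => Ps)
      {xs | ‖(1 / (ns : ℝ)) • ∑ i, w (xs i) • φ (xs i) - μt'‖
          ≤ B * Real.sqrt (M / ns) * (1 + Real.sqrt (2 * Real.log (1 / δ)))}
      ≥ ENNReal.ofReal (1 - δ) := by
  classical
  obtain ⟨hδ0, hδ1⟩ := hδ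
  have hns' : (0:ℝ) < ns := by exact_mod_cast hns
  set R : ℝ := B * Real.sqrt M with hRdef
  have hsqrtM : 0 < Real.sqrt M := Real.sqrt_pos.2 hM
  have hR0 : 0 < R := mul_pos hB hsqrtM
  set Z : X → H := fun x => w x • φ x with hZdef
  have hZsm : StronglyMeasurable Z := hwmeas.stronglyMeasurable.smul hφsm
  have hZR : ∀ x, ‖Z x‖ ≤ R := by
    intro x
    calc ‖Z x‖ = |w x| * ‖φ x‖ := by rw [hZdef]; rw [norm_smul, Real.norm_eq_abs]
      _ ≤ B * Real.sqrt M :=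
        mul_le_mul (by rw [abs_of_nonneg (hw x).1]; exact (hw x).2) (hφ x) (norm_nonneg _) hB.le
  have hZint : Integrable Z Ps := hint
  have hμR : ‖μt'‖ ≤ R := by
    rw [hμt']
    calc ‖∫ x, w x • φ x ∂Ps‖ ≤ R * (Ps Set.univ).toReal :=
        norm_integral_le_of_norm_le_const (ae_of_all _ fun x => hZR x)
      _ = R := by simp
  set PN : Measure (Fin ns → X) := Measure.pi fun _ => Ps with hPN
  set f : (Fin ns → X) → ℝ := fun xs => ‖(1 / (ns : ℝ)) • ∑ i, Z (xs i) - μt'‖ with hfdef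
  have hSsm : StronglyMeasurable fun xs : Fin ns → X => ∑ i, Z (xs i) :=
    Finset.stronglyMeasurable_fun_sum _ fun i _ => hZsm.comp_measurable (measurable_pi_apply i)
  have hfsm : StronglyMeasurable f :=
    ((hSsm.const_smul (1/(ns:ℝ))).sub stronglyMeasurable_const).norm
  have hSbd : ∀ xs : Fin ns → X, ‖∑ i, Z (xs i)‖ ≤ ns * R := by
    intro xs
    calc ‖∑ i, Z (xs i)‖ ≤ ∑ i : Fin ns, ‖Z (xs i)‖ := norm_sum_le _ _
      _ ≤ ∑ _i : Fin ns, R := Finset.sum_le_sum fun i _ => hZR _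
      _ = ns * R := by simp [mul_comm]
  have hfK : ∀ xs, |f xs| ≤ 2*R := by
    intro xs
    rw [abs_of_nonneg (norm_nonneg _)]
    calc ‖(1 / (ns : ℝ)) • ∑ i, Z (xs i) - μt'‖
        ≤ ‖(1 / (ns : ℝ)) • ∑ i, Z (xs i)‖ + ‖μt'‖ := norm_sub_le _ _
      _ ≤ R + R := by
          apply add_le_add _ hμR
          rw [norm_smul, Real.norm_eq_abs, abs_of_nonneg (by positivity : (0:ℝ) ≤ 1/(ns:ℝ))]
          calc (1/(ns:ℝ)) * ‖∑ i, Z (xs i)‖ ≤ (1/(ns:ℝ)) * (ns * R) :=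
              mul_le_mul_of_nonneg_left (hSbd xs) (by positivity)
            _ = R := by field_simp
      _ = 2*R := by ring
  have hdiff : ∀ (xs : Fin ns → X) (i : Fin ns) (y : X),
      f xs - f (Function.update xs i y) ≤ 2*R/ns := by
    intro xs i y
    have hupd : ∀ j, Z (Function.update xs i y j)
        = Function.update (fun j => Z (xs j)) i (Z y) j := by
      intro j
      by_cases h : j = i
      · subst h; simp
      · simp [Function.update_of_ne h]
    have hsumdiff : (∑ j, Z (Function.update xs i y j)) - ∑ j, Z (xs j) = Z y - Z (xs i) := by
      simp_rw [hupd]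
      rw [Finset.sum_update_of_mem (Finset.mem_univ i),
        ← Finset.add_sum_erase _ (fun j => Z (xs j)) (Finset.mem_univ i),
        Finset.sdiff_singleton_eq_erase]
      abel
    have hkey : ((1 / (ns : ℝ)) • ∑ j, Z (xs j) - μt')
        - ((1 / (ns : ℝ)) • ∑ j, Z (Function.update xs i y j) - μt')
        = (1 / (ns : ℝ)) • (Z (xs i) - Z y) := by
      have h9 : (∑ j, Z (xs j)) - ∑ j, Z (Function.update xs i y j) = Z (xs i) - Z y := by
        have h10 : (∑ j, Z (xs j)) - ∑ j, Z (Function.update xs i y j)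
            = -((∑ j, Z (Function.update xs i y j)) - ∑ j, Z (xs j)) := by abel
        rw [h10, hsumdiff]
        abel
      rw [← h9, smul_sub]
      abel
    calc f xs - f (Function.update xs i y)
        ≤ ‖((1 / (ns : ℝ)) • ∑ j, Z (xs j) - μt')
            - ((1 / (ns : ℝ)) • ∑ j, Z (Function.update xs i y j) - μt')‖ :=
          norm_sub_norm_le _ _
      _ = (1/(ns:ℝ)) * ‖Z (xs i) - Z y‖ := by
          rw [hkey, norm_smul, Real.norm_eq_abs,
            abs_of_nonneg (by positivity : (0:ℝ) ≤ 1/(ns:ℝ))]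
      _ ≤ (1/(ns:ℝ)) * (R + R) := by
          apply mul_le_mul_of_nonneg_left _ (by positivity)
          exact (norm_sub_le _ _).trans (add_le_add (hZR _) (hZR _))
      _ = 2*R/ns := by field_simp; ring
  -- second moment bound
  set Y : X → H := fun x => Z x - μt' with hYdef
  have hYsm : StronglyMeasurable Y := hZsm.sub stronglyMeasurable_const
  have hYR : ∀ x, ‖Y x‖ ≤ R + R := fun x =>
    (norm_sub_le _ _).trans (add_le_add (hZR x) hμR)
  have hYmean : ∫ x, Y x ∂Ps = 0 := by
    rw [hYdef]
    rw [integral_sub hZint (integrable_const _), integral_const, probReal_univ]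
    simp [hμt', hZdef]
  have hY2 : ∫ x, ‖Y x‖^2 ∂Ps ≤ R^2 := by
    have hpt : ∀ x, ‖Y x‖^2 = ‖Z x‖^2 - 2*⟪Z x, μt'⟫ + ‖μt'‖^2 := fun x =>
      norm_sub_sq_real _ _
    have hZsq : Integrable (fun x => ‖Z x‖^2) Ps := by
      refine integrable_of_bdd (hZsm.norm.measurable.pow_const 2).aestronglyMeasurable
        (C := R^2) fun x => ?_
      rw [abs_of_nonneg (by positivity)]
      exact sq_le_sq' (by linarith [norm_nonneg (Z x)]) (hZR x)
    have hZinmeas : AEStronglyMeasurable (fun x => ⟪Z x, μt'⟫) Ps :=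
      (hZsm.inner stronglyMeasurable_const).aestronglyMeasurable
    have hZin : Integrable (fun x => ⟪Z x, μt'⟫) Ps := by
      refine integrable_of_bdd hZinmeas (C := R * ‖μt'‖) fun x => ?_
      calc |⟪Z x, μt'⟫| ≤ ‖Z x‖ * ‖μt'‖ := abs_real_inner_le_norm _ _
        _ ≤ R * ‖μt'‖ := mul_le_mul_of_nonneg_right (hZR x) (norm_nonneg _)
    have hinval : ∫ x, ⟪Z x, μt'⟫ ∂Ps = ‖μt'‖^2 := by
      have h3 : ∀ x, ⟪Z x, μt'⟫ = ⟪μt', Z x⟫ := fun x => real_inner_comm _ _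
      simp_rw [h3]
      rw [integral_inner hZint, ← hμt', real_inner_self_eq_norm_sq]
    have hZsqle : ∫ x, ‖Z x‖^2 ∂Ps ≤ R^2 := by
      have h11 : ∫ x, ‖Z x‖^2 ∂Ps ≤ ∫ _x, R^2 ∂Ps := by
        apply integral_mono hZsq (integrable_const _)
        intro x
        exact sq_le_sq' (by linarith [norm_nonneg (Z x)]) (hZR x)
      simpa using h11
    have hsplit : ∫ x, ‖Y x‖^2 ∂Ps
        = (∫ x, ‖Z x‖^2 ∂Ps) - 2*(∫ x, ⟪Z x, μt'⟫ ∂Ps) + ‖μt'‖^2 := by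
      have h4 : Integrable (fun x => ‖Z x‖^2 - 2*⟪Z x, μt'⟫) Ps :=
        hZsq.sub (hZin.const_mul 2)
      calc ∫ x, ‖Y x‖^2 ∂Ps = ∫ x, (‖Z x‖^2 - 2*⟪Z x, μt'⟫ + ‖μt'‖^2) ∂Ps :=
          integral_congr_ae (ae_of_all _ fun x => hpt x)
        _ = (∫ x, (‖Z x‖^2 - 2*⟪Z x, μt'⟫) ∂Ps) + ‖μt'‖^2 := by
            rw [integral_add h4 (integrable_const _), integral_const, probReal_univ]
            simp
        _ = (∫ x, ‖Z x‖^2 ∂Ps) - 2*(∫ x, ⟪Z x, μt'⟫ ∂Ps) + ‖μt'‖^2 := by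
            rw [integral_sub hZsq (hZin.const_mul 2), integral_const_mul]
    rw [hsplit, hinval]
    nlinarith [sq_nonneg ‖μt'‖, hZsqle]
  have hsum := sum_sq_pi Ps Y hYsm (R+R) hYR hYmean ns
  -- rewrite f in terms of Y
  have hfeq : ∀ xs : Fin ns → X, f xs = (1/(ns:ℝ)) * ‖∑ i, Y (xs i)‖ := by
    intro xs
    have h1 : ∑ i : Fin ns, Y (xs i) = (∑ i, Z (xs i)) - (ns:ℕ) • μt' := by
      rw [hYdef]
      rw [Finset.sum_sub_distrib, Finset.sum_const, Finset.card_univ, Fintype.card_fin]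
    have h2 : (1/(ns:ℝ)) • ∑ i, Y (xs i) = (1 / (ns : ℝ)) • ∑ i, Z (xs i) - μt' := by
      rw [h1, smul_sub]
      congr 1
      rw [← Nat.cast_smul_eq_nsmul ℝ, smul_smul]
      rw [show (1/(ns:ℝ)) * (ns:ℝ) = 1 by field_simp]
      rw [one_smul]
    rw [hfdef]
    simp only []
    rw [← h2, norm_smul, Real.norm_eq_abs, abs_of_nonneg (by positivity : (0:ℝ) ≤ 1/(ns:ℝ))]
  set Ef : ℝ := ∫ xs, f xs ∂PN with hEfdef
  have hEf0 : 0 ≤ Ef := integral_nonneg fun xs => norm_nonneg _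
  have hfint : Integrable f PN := integrable_of_bdd hfsm.aestronglyMeasurable hfK
  have hEfK : |Ef| ≤ 2*R := by
    rw [hEfdef, ← Real.norm_eq_abs]
    calc ‖∫ xs, f xs ∂PN‖ ≤ (2*R) * (PN Set.univ).toReal :=
        norm_integral_le_of_norm_le_const (ae_of_all _ fun xs => by
          rw [Real.norm_eq_abs]; exact hfK xs)
      _ = 2*R := by simp
  -- E f ≤ B √(M/ns)
  have hf2 : ∫ xs, (f xs)^2 ∂PN ≤ R^2/ns := by
    have h5 : ∀ xs : Fin ns → X, (f xs)^2 = (1/(ns:ℝ))^2 * ‖∑ i, Y (xs i)‖^2 := by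
      intro xs; rw [hfeq xs, mul_pow]
    calc ∫ xs, (f xs)^2 ∂PN = ∫ xs, (1/(ns:ℝ))^2 * ‖∑ i, Y (xs i)‖^2 ∂PN :=
        integral_congr_ae (ae_of_all _ fun xs => h5 xs)
      _ = (1/(ns:ℝ))^2 * ∫ xs, ‖∑ i, Y (xs i)‖^2 ∂PN := integral_const_mul _ _
      _ = (1/(ns:ℝ))^2 * ((ns:ℝ) * ∫ x, ‖Y x‖^2 ∂Ps) := by rw [hPN, hsum]
      _ ≤ (1/(ns:ℝ))^2 * ((ns:ℝ) * R^2) := by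
          apply mul_le_mul_of_nonneg_left _ (by positivity)
          exact mul_le_mul_of_nonneg_left hY2 hns'.le
      _ = R^2/ns := by field_simp
  have hmem : MeasureTheory.MemLp f 2 PN :=
    MeasureTheory.MemLp.of_bound hfsm.aestronglyMeasurable (2*R)
      (ae_of_all _ fun xs => by rw [Real.norm_eq_abs]; exact hfK xs)
  have hEfsq : Ef^2 ≤ R^2/ns := by
    have hvd := ProbabilityTheory.variance_eq_sub hmem
    have hvn := ProbabilityTheory.variance_nonneg f PN
    rw [hvd] at hvn
    have h12 : integral PN (f ^ 2) = ∫ xs, (f xs)^2 ∂PN :=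
      integral_congr_ae (ae_of_all _ fun xs => by simp)
    have h13 : integral PN f = Ef := rfl
    rw [h12, h13] at hvn
    linarith [hf2]
  have hEfle : Ef ≤ B * Real.sqrt (M/ns) := by
    have h4 : Ef ≤ Real.sqrt (R^2/ns) := by
      rw [← Real.sqrt_sq hEf0]
      exact Real.sqrt_le_sqrt hEfsq
    have h5 : Real.sqrt (R^2/ns) = B * Real.sqrt (M/ns) := by
      rw [hRdef, mul_pow, Real.sq_sqrt hM.le,
        show B^2*M/(ns:ℝ) = B^2*(M/ns) by ring,
        Real.sqrt_mul (sq_nonneg B), Real.sqrt_sq hB.le]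
    linarith [h4, h5.le, h5.ge]
  -- Chernoff step
  set L : ℝ := Real.log (1/δ) with hLdef
  have hL : 0 < L := Real.log_pos (by rw [lt_div_iff₀ hδ0]; linarith)
  set ε : ℝ := B * Real.sqrt (M/ns) * Real.sqrt (2*L) with hεdef
  have hε0 : 0 < ε :=
    mul_pos (mul_pos hB (Real.sqrt_pos.2 (div_pos hM hns'))) (Real.sqrt_pos.2 (by linarith))
  set c : ℝ := 2*R/ns with hcdef
  set t : ℝ := ε*ns/R^2 with htdef
  have ht0 : 0 ≤ t := by positivity
  have hmg := mcdiarmid_mgf Ps c (2*R) t ns f hfsm.measurable hfK hdiff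
  rw [← hPN] at hmg
  rw [← hEfdef] at hmg
  have hfsubm : Measurable fun xs => f xs - Ef := hfsm.measurable.sub measurable_const
  have hintexp : Integrable (fun xs => Real.exp (t * (f xs - Ef))) PN := by
    refine integrable_of_bdd
      (Real.measurable_exp.comp (hfsubm.const_mul t)).aestronglyMeasurable
      (C := Real.exp (|t| * (4*R))) fun xs => ?_
    rw [abs_of_pos (Real.exp_pos _)]
    apply Real.exp_le_exp.2
    have h6 := abs_le.1 (hfK xs)
    have h7 := abs_le.1 hEfK
    calc t * (f xs - Ef) ≤ |t * (f xs - Ef)| := le_abs_self _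
      _ = |t| * |f xs - Ef| := abs_mul _ _
      _ ≤ |t| * (4*R) := by
          apply mul_le_mul_of_nonneg_left _ (abs_nonneg t)
          rw [abs_le]
          constructor <;> [linarith [h6.1, h7.2]; linarith [h6.2, h7.1]]
  have hchern := ProbabilityTheory.measure_ge_le_exp_mul_mgf (μ := PN)
    (X := fun xs => f xs - Ef) ε ht0 hintexp
  have hmgf_eq : ProbabilityTheory.mgf (fun xs => f xs - Ef) PN t
      = ∫ xs, Real.exp (t * (f xs - Ef)) ∂PN := rfl
  have hexp_eq : Real.exp (-t * ε) * Real.exp ((ns:ℝ) * (t^2*c^2/8)) = δ := by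
    rw [← Real.exp_add]
    have hε2 : ε^2 = B^2*(M/ns)*(2*L) := by
      rw [hεdef, mul_pow, mul_pow, Real.sq_sqrt (div_nonneg hM.le hns'.le),
        Real.sq_sqrt (by linarith : (0:ℝ) ≤ 2*L)]
    have hR2 : R^2 = B^2*M := by rw [hRdef, mul_pow, Real.sq_sqrt hM.le]
    have h6 : -t * ε + (ns:ℝ)*(t^2*c^2/8) = -(ε^2*(ns:ℝ)/(2*R^2)) := by
      rw [htdef, hcdef]
      field_simp
      ring
    have h7 : ε^2*(ns:ℝ)/(2*R^2) = L := by
      rw [hε2, hR2]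
      field_simp
    rw [h6, h7, hLdef, Real.exp_neg, Real.exp_log (by positivity : (0:ℝ) < 1/δ),
      one_div, inv_inv]
  have htoReal : (PN {xs | ε ≤ f xs - Ef}).toReal ≤ δ := by
    calc (PN {xs | ε ≤ f xs - Ef}).toReal
        ≤ Real.exp (-t * ε) * ProbabilityTheory.mgf (fun xs => f xs - Ef) PN t := hchern
      _ ≤ Real.exp (-t * ε) * Real.exp ((ns:ℝ) * (t^2*c^2/8)) := by
          apply mul_le_mul_of_nonneg_left _ (Real.exp_pos _).le
          rw [hmgf_eq]
          exact hmg
      _ = δ := hexp_eq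
  have hbad : PN {xs | ε ≤ f xs - Ef} ≤ ENNReal.ofReal δ :=
    (ENNReal.le_ofReal_iff_toReal_le (measure_ne_top _ _) hδ0.le).2 htoReal
  -- final event manipulation
  have hboundeq : B * Real.sqrt (M / ns) * (1 + Real.sqrt (2 * Real.log (1 / δ)))
      = B * Real.sqrt (M/ns) + ε := by
    rw [hεdef, hLdef]; ring
  have hsub : {xs | f xs ≤ B * Real.sqrt (M / ns) * (1 + Real.sqrt (2 * Real.log (1 / δ)))}ᶜ
      ⊆ {xs | ε ≤ f xs - Ef} := by
    intro xs hxs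
    simp only [Set.mem_compl_iff, Set.mem_setOf_eq, not_le] at hxs
    simp only [Set.mem_setOf_eq]
    rw [hboundeq] at hxs
    linarith [hEfle]
  have hSmeas : MeasurableSet
      {xs | f xs ≤ B * Real.sqrt (M / ns) * (1 + Real.sqrt (2 * Real.log (1 / δ)))} :=
    measurableSet_le hfsm.measurable measurable_const
  have hcompl : PN {xs | f xs ≤ B * Real.sqrt (M / ns) * (1 + Real.sqrt (2 * Real.log (1 / δ)))}
      = 1 - PN {xs | f xs ≤ B * Real.sqrt (M / ns) * (1 + Real.sqrt (2 * Real.log (1 / δ)))}ᶜ := by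
    have := prob_compl_eq_one_sub (μ := PN) hSmeas.compl
    rwa [compl_compl] at this
  show PN {xs | f xs ≤ B * Real.sqrt (M / ns) * (1 + Real.sqrt (2 * Real.log (1 / δ)))}
      ≥ ENNReal.ofReal (1 - δ)
  rw [hcompl]
  have h8 : PN {xs | f xs ≤ B * Real.sqrt (M / ns) * (1 + Real.sqrt (2 * Real.log (1 / δ)))}ᶜ
      ≤ ENNReal.ofReal δ := le_trans (measure_mono hsub) hbad
  calc ENNReal.ofReal (1 - δ) = 1 - ENNReal.ofReal δ := by
        rw [ENNReal.ofReal_sub 1 hδ0.le, ENNReal.ofReal_one]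
    _ ≤ 1 - PN {xs | f xs ≤ B * Real.sqrt (M / ns) * (1 + Real.sqrt (2 * Real.log (1 / δ)))}ᶜ :=
        tsub_le_tsub_left h8 1
end

section
/- Let P_t be a probability measure on X such that φ is Bochner integrable with respect to P_t, and set μ_t = ∫ φ dP_t. Then for every δ ∈ (0,1), with probability at least 1 − δ over an i.i.d. sample z_1,…,z_{n_t} from P_t, the empirical embedding mean satisfies ‖ (1/n_t) Σ_{i=1}^{n_t} φ(z_i) − μ_t ‖ ≤ √(M/n_t) · (1 + √(2 log(1/δ))). -/
open MeasureTheory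
open scoped RealInnerProductSpace BigOperators

section EMCAux
open Real ProbabilityTheory

lemma EMC_integrable_of_bdd {Ω : Type*} [MeasurableSpace Ω] {μ : Measure Ω} [IsFiniteMeasure μ]
    {f : Ω → ℝ} (hm : Measurable f) {B : ℝ} (hB : ∀ x, |f x| ≤ B) : Integrable f μ :=
  (integrable_const B).mono' hm.aestronglyMeasurable (ae_of_all _ fun x => by
    simpa using hB x)


lemma EMC_D_pos {p : ℝ} (hp : 0 ≤ p) (hp1 : p ≤ 1) (h : ℝ) : 0 < 1 - p + p * exp h := by
  rcases le_or_gt (exp h) 1 with hle | hlt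
  · nlinarith [exp_pos h]
  · nlinarith [exp_pos h]

lemma EMC_core_ineq {p : ℝ} (hp : 0 ≤ p) (hp1 : p ≤ 1) (h : ℝ) :
    Real.log (1 - p + p * exp h) ≤ p * h + h ^ 2 / 8 := by
  set F : ℝ → ℝ := fun x => p * x + x ^ 2 / 8 - Real.log (1 - p + p * exp x) with hF
  set G : ℝ → ℝ := fun x => p + x / 4 - p * exp x / (1 - p + p * exp x) with hG
  have hD : ∀ x : ℝ, (1 - p + p * exp x) ≠ 0 := fun x => (EMC_D_pos hp hp1 x).ne'
  have hder : ∀ x : ℝ, HasDerivAt F (G x) x := by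
    intro x
    have h1 : HasDerivAt (fun y : ℝ => 1 - p + p * exp y) (p * exp x) x :=
      ((hasDerivAt_exp x).const_mul p).const_add (1 - p)
    have h2 : HasDerivAt (fun y : ℝ => Real.log (1 - p + p * exp y))
        (p * exp x / (1 - p + p * exp x)) x := h1.log (hD x)
    have h3 : HasDerivAt (fun y : ℝ => p * y + y ^ 2 / 8) (p + 2 * x / 8) x := by
      have := ((hasDerivAt_id x).const_mul p).add ((hasDerivAt_pow 2 x).div_const 8)
      simpa [pow_one, Pi.add_def] using this
    have : HasDerivAt F _ x := h3.sub h2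
    convert this using 1
    ring
  have hderG : ∀ x : ℝ, HasDerivAt G (1 / 4 - p * (1 - p) * exp x / (1 - p + p * exp x) ^ 2) x := by
    intro x
    have h1 : HasDerivAt (fun y : ℝ => 1 - p + p * exp y) (p * exp x) x :=
      ((hasDerivAt_exp x).const_mul p).const_add (1 - p)
    have h2 : HasDerivAt (fun y : ℝ => p * exp y) (p * exp x) x :=
      (hasDerivAt_exp x).const_mul p
    have h4 := (h2.div h1 (hD x))
    have h5 : HasDerivAt (fun y : ℝ => p + y / 4) (1 / 4) x := by
      simpa using ((hasDerivAt_id x).div_const 4).const_add p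
    have : HasDerivAt G _ x := h5.sub h4
    convert this using 1
    field_simp
    ring
  have hGmono : Monotone G := by
    apply monotone_of_deriv_nonneg (fun x => (hderG x).differentiableAt)
    intro x
    rw [(hderG x).deriv]
    have hDx := EMC_D_pos hp hp1 x
    rw [sub_nonneg, div_le_iff₀ (by positivity)]
    nlinarith [sq_nonneg ((1 - p) - p * exp x), exp_pos x]
  have hG0 : G 0 = 0 := by
    simp only [hG, exp_zero, mul_one]
    have : 1 - p + p = 1 := by ring
    rw [this]
    simp
  have hF0 : F 0 = 0 := by
    simp only [hF, exp_zero, mul_one, mul_zero]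
    have : 1 - p + p = 1 := by ring
    rw [this]
    simp
  have hFd : Differentiable ℝ F := fun x => (hder x).differentiableAt
  have key : ∀ x : ℝ, 0 ≤ F x := by
    intro x
    rcases le_or_gt 0 x with hx | hx
    · have hmono : MonotoneOn F (Set.Ici 0) := by
        apply monotoneOn_of_deriv_nonneg (convex_Ici 0) hFd.continuous.continuousOn
          hFd.differentiableOn
        intro y hy
        rw [(hder y).deriv]
        have : (0:ℝ) ≤ y := le_of_lt (by simpa using hy)
        have := hGmono this
        rw [hG0] at this
        linarith [hGmono (le_of_lt (show (0:ℝ) < y by simpa using hy))]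
      have := hmono (Set.self_mem_Ici) (Set.mem_Ici.2 hx) hx
      linarith [hF0 ▸ this]
    · have hanti : AntitoneOn F (Set.Iic 0) := by
        apply antitoneOn_of_deriv_nonpos (convex_Iic 0) hFd.continuous.continuousOn
          hFd.differentiableOn
        intro y hy
        rw [(hder y).deriv]
        have hy0 : y < 0 := by simpa using hy
        have := hGmono hy0.le
        rw [hG0] at this
        linarith
      have := hanti (Set.mem_Iic.2 hx.le) (Set.self_mem_Iic) hx.le
      linarith [hF0 ▸ this]
  have := key h
  simp only [hF] at this
  linarith

lemma EMC_hoeffding_mgf {Ω : Type*} [MeasurableSpace Ω] (μ : Measure Ω) [IsProbabilityMeasure μ]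
    (Y : Ω → ℝ) (hY : Measurable Y) (c t : ℝ)
    (hosc : ∀ x y, Y x - Y y ≤ c) (hmean : ∫ x, Y x ∂μ = 0) :
    ∫ x, exp (t * Y x) ∂μ ≤ exp (t ^ 2 * c ^ 2 / 8) := by
  have hne : Nonempty Ω := by
    by_contra hemp
    haveI := not_nonempty_iff.1 hemp
    have h1 := measure_univ (μ := μ)
    rw [Set.eq_empty_of_isEmpty (Set.univ : Set Ω)] at h1
    simp at h1
  obtain ⟨x₀⟩ := hne
  have hc0 : 0 ≤ c := by simpa using hosc x₀ x₀
  set b : ℝ := sSup (Set.range Y) with hb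
  have hbdd : BddAbove (Set.range Y) := ⟨Y x₀ + c, by
    rintro _ ⟨x, rfl⟩; linarith [hosc x x₀]⟩
  have hub : ∀ x, Y x ≤ b := fun x => le_csSup hbdd ⟨x, rfl⟩
  have hlb : ∀ x, b - c ≤ Y x := by
    intro x
    have : b ≤ Y x + c := csSup_le ⟨Y x₀, x₀, rfl⟩ (by
      rintro _ ⟨y, rfl⟩; linarith [hosc y x])
    linarith
  set a : ℝ := b - c with ha
  have hYbd : ∀ x, |Y x| ≤ |a| + |b| := fun x => by
    have h1 := hub x; have h2 := hlb x
    cases abs_cases (Y x) <;> cases abs_cases a <;> cases abs_cases b <;> linarith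
  have hYint : Integrable Y μ := EMC_integrable_of_bdd hY hYbd
  have ha0 : a ≤ 0 := by
    have h1 : ∫ _x, a ∂μ ≤ ∫ x, Y x ∂μ :=
      integral_mono (integrable_const a) hYint hlb
    simpa [hmean] using h1
  have hb0 : 0 ≤ b := by
    have h1 : ∫ x, Y x ∂μ ≤ ∫ _x, b ∂μ :=
      integral_mono hYint (integrable_const b) hub
    simpa [hmean] using h1
  rcases eq_or_lt_of_le hc0 with hceq | hcpos
  · have hab : a = b := by rw [ha, ← hceq]; ring
    have hb00 : b = 0 := le_antisymm (hab ▸ ha0) hb0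
    have hY0 : ∀ x, Y x = 0 := fun x =>
      le_antisymm (hb00 ▸ hub x) (by have := hlb x; rw [ha, hb00, ← hceq] at this; linarith)
    simp only [hY0, mul_zero, exp_zero, integral_const, measure_univ]
    simp [exp_nonneg]
    positivity
  · have hab : a < b := by rw [ha]; linarith
    have hpw : ∀ x, exp (t * Y x) ≤
        ((b - Y x) * exp (t * a) + (Y x - a) * exp (t * b)) / c := by
      intro x
      have hu := hub x
      have hl := hlb x
      set θ : ℝ := (b - Y x) / c with hθ
      have hθ0 : 0 ≤ θ := div_nonneg (by linarith) hc0
      have hθ1 : (Y x - a) / c = 1 - θ := by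
        rw [hθ, ha]; field_simp; ring
      have h1θ0 : 0 ≤ 1 - θ := by rw [← hθ1]; exact div_nonneg (by linarith) hc0
      have hsum : θ + (1 - θ) = 1 := by ring
      have hcomb := convexOn_exp.2 (Set.mem_univ (t * a)) (Set.mem_univ (t * b)) hθ0 h1θ0 hsum
      have harg : θ • (t * a) + (1 - θ) • (t * b) = t * Y x := by
        rw [← hθ1]
        simp only [smul_eq_mul]
        field_simp [hθ]
        rw [hθ, ha]; field_simp; ring
      rw [harg] at hcomb
      calc exp (t * Y x) ≤ θ * exp (t * a) + (1 - θ) * exp (t * b) := by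
            simpa [smul_eq_mul] using hcomb
        _ = ((b - Y x) * exp (t * a) + (Y x - a) * exp (t * b)) / c := by
            rw [← hθ1, hθ]; field_simp
    have hint1 : Integrable (fun x => exp (t * Y x)) μ := by
      apply EMC_integrable_of_bdd (by fun_prop) (B := exp (|t| * (|a| + |b|)))
      intro x
      rw [abs_of_nonneg (exp_nonneg _)]
      apply exp_le_exp.2
      calc t * Y x ≤ |t * Y x| := le_abs_self _
        _ ≤ |t| * (|a| + |b|) := by
            rw [abs_mul]; exact mul_le_mul_of_nonneg_left (hYbd x) (abs_nonneg t)
    have hint2 : Integrable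
        (fun x => ((b - Y x) * exp (t * a) + (Y x - a) * exp (t * b)) / c) μ := by
      apply Integrable.div_const
      exact (((integrable_const b).sub hYint).mul_const _).add
        ((hYint.sub (integrable_const a)).mul_const _)
    have hstep : ∫ x, exp (t * Y x) ∂μ ≤ (b * exp (t * a) - a * exp (t * b)) / c := by
      calc ∫ x, exp (t * Y x) ∂μ
          ≤ ∫ x, ((b - Y x) * exp (t * a) + (Y x - a) * exp (t * b)) / c ∂μ :=
            integral_mono hint1 hint2 hpw
        _ = (b * exp (t * a) - a * exp (t * b)) / c := by
            rw [integral_div]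
            congr 1
            have ia : Integrable (fun x => (b - Y x) * exp (t * a)) μ := by
              exact ((integrable_const b).sub hYint).mul_const _
            have ib : Integrable (fun x => (Y x - a) * exp (t * b)) μ := by
              exact (hYint.sub (integrable_const a)).mul_const _
            rw [integral_add ia ib]
            rw [integral_mul_const, integral_mul_const, integral_sub (integrable_const b) hYint,
              integral_sub hYint (integrable_const a), hmean]
            simp
            ring
    -- apply the analytic bound with p = -a/c, h = t*c
    set p : ℝ := -a / c with hp
    have hp0 : 0 ≤ p := div_nonneg (by linarith) hc0
    have hp1 : p ≤ 1 := by rw [hp, div_le_one hcpos]; linarith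
    have hfac : (b * exp (t * a) - a * exp (t * b)) / c
        = exp (t * a) * (1 - p + p * exp (t * c)) := by
      rw [hp]
      have hbc : b = c + a := by rw [ha]; ring
      rw [hbc]
      have : t * (c + a) = t * c + t * a := by ring
      rw [this, exp_add]
      field_simp
      ring
    have hDpos := EMC_D_pos hp0 hp1 (t * c)
    have hlog := EMC_core_ineq hp0 hp1 (t * c)
    have hpa : p * (t * c) = -(t * a) := by rw [hp]; field_simp
    calc ∫ x, exp (t * Y x) ∂μ ≤ exp (t * a) * (1 - p + p * exp (t * c)) := by
          rw [← hfac]; exact hstep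
      _ = exp (t * a + Real.log (1 - p + p * exp (t * c))) := by
          rw [exp_add, exp_log hDpos]
      _ ≤ exp (t ^ 2 * c ^ 2 / 8) := by
          apply exp_le_exp.2
          have := hlog
          rw [hpa] at this
          have h2 : (t * c) ^ 2 / 8 = t ^ 2 * c ^ 2 / 8 := by ring
          linarith [h2 ▸ this]


lemma EMC_abs_integral_le_integral_abs {Ω : Type*} [MeasurableSpace Ω] {μ : Measure Ω}
    {f : Ω → ℝ} : |∫ x, f x ∂μ| ≤ ∫ x, |f x| ∂μ := by
  simpa [Real.norm_eq_abs] using norm_integral_le_integral_norm (μ := μ) f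



lemma EMC_mcdiarmid_mgf {X : Type*} [MeasurableSpace X] (P : Measure X) [IsProbabilityMeasure P] :
    ∀ (n : ℕ) (f : (Fin n → X) → ℝ), Measurable f → ∀ (B : ℝ), (∀ z, |f z| ≤ B) →
    ∀ (c : ℝ), (∀ (z : Fin n → X) (i : Fin n) (x : X), f (Function.update z i x) - f z ≤ c) →
    ∀ t : ℝ, ∫ z, exp (t * (f z - ∫ z', f z' ∂(Measure.pi fun _ : Fin n => P)))
        ∂(Measure.pi fun _ : Fin n => P) ≤ exp (t ^ 2 * n * c ^ 2 / 8) := by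
  intro n
  induction n with
  | zero =>
    intro f hf B hB c hc t
    have hfc : f = fun _ => f (fun i => i.elim0) :=
      funext fun z => congrArg f (Subsingleton.elim _ _)
    rw [hfc]
    simp
  | succ n ih =>
    intro f hf B hB c hc t
    set Q : Measure (Fin n → X) := Measure.pi fun _ : Fin n => P with hQdef
    set P1 : Measure (Fin (n + 1) → X) := Measure.pi fun _ : Fin (n + 1) => P with hP1def
    set e := MeasurableEquiv.piFinSuccAbove (fun _ : Fin (n + 1) => X) 0 with hedef
    have hesymm : ∀ q : X × (Fin n → X), e.symm q = Fin.cons q.1 q.2 := by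
      intro q
      simp [hedef, MeasurableEquiv.piFinSuccAbove_symm_apply, Fin.insertNthEquiv,
        Fin.insertNth_zero']
    have mp : MeasurePreserving e.symm (P.prod Q) P1 :=
      (measurePreserving_piFinSuccAbove (fun _ : Fin (n + 1) => P) 0).symm
    have mcons : Measurable (fun q : X × (Fin n → X) => (Fin.cons q.1 q.2 : Fin (n + 1) → X)) := by
      have := e.symm.measurable
      convert this using 1
      exact funext fun q => (hesymm q).symm
    -- the conditional mean over the first coordinate
    set g : (Fin n → X) → ℝ := fun w => ∫ x, f (Fin.cons x w) ∂P with hgdef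
    set m : ℝ := ∫ z, f z ∂P1 with hmdef
    have hFpair : Measurable (fun q : X × (Fin n → X) => f (Fin.cons q.1 q.2)) := hf.comp mcons
    have hg_sm : StronglyMeasurable g := by
      have := hFpair.stronglyMeasurable.integral_prod_left' (μ := P)
      exact this
    have hg_meas : Measurable g := hg_sm.measurable
    have hgB : ∀ w, |g w| ≤ B := by
      intro w
      have h1 : |∫ x, f (Fin.cons x w) ∂P| ≤ ∫ x, |f (Fin.cons x w)| ∂P :=
        EMC_abs_integral_le_integral_abs
      have hint : Integrable (fun x => f (Fin.cons x w)) P := by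
        apply EMC_integrable_of_bdd (hf.comp (by fun_prop)) (B := B)
        intro x; exact hB _
      have h2 : ∫ x, |f (Fin.cons x w)| ∂P ≤ ∫ _x, B ∂P :=
        integral_mono hint.abs (integrable_const B) (fun x => hB _)
      simpa using h1.trans h2
    have hconsint : ∀ w, Integrable (fun x => f (Fin.cons x w)) P := by
      intro w
      apply EMC_integrable_of_bdd (hf.comp (by fun_prop)) (B := B)
      intro x; exact hB _
    have hgc : ∀ (w : Fin n → X) (i : Fin n) (y : X), g (Function.update w i y) - g w ≤ c := by
      intro w i y
      rw [hgdef]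
      simp only
      rw [← integral_sub (hconsint _) (hconsint w)]
      have hpt : ∀ x, f (Fin.cons x (Function.update w i y)) - f (Fin.cons x w) ≤ c := by
        intro x
        rw [Fin.cons_update]
        exact hc (Fin.cons x w) i.succ y
      calc ∫ x, (f (Fin.cons x (Function.update w i y)) - f (Fin.cons x w)) ∂P
          ≤ ∫ _x, c ∂P := integral_mono ((hconsint _).sub (hconsint w)) (integrable_const c) hpt
        _ = c := by simp
    have hmB : |m| ≤ B := by
      have h1 : |∫ z, f z ∂P1| ≤ ∫ z, |f z| ∂P1 := EMC_abs_integral_le_integral_abs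
      have hfint : Integrable f P1 := EMC_integrable_of_bdd hf hB
      have h2 : ∫ z, |f z| ∂P1 ≤ ∫ _z, B ∂P1 :=
        integral_mono hfint.abs (integrable_const B) (fun z => hB _)
      simpa using h1.trans h2
    -- Fubini : m = ∫ g dQ
    have hfPQint : Integrable (fun q : X × (Fin n → X) => f (Fin.cons q.1 q.2)) (P.prod Q) :=
      EMC_integrable_of_bdd hFpair (B := B) (fun q => hB _)
    have hfub : m = ∫ w, g w ∂Q := by
      rw [hmdef, ← mp.integral_comp e.symm.measurableEmbedding f]
      simp only [hesymm]
      exact integral_prod_symm _ hfPQint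
    -- main computation
    have hEpair : Measurable (fun q : X × (Fin n → X) => exp (t * (f (Fin.cons q.1 q.2) - m))) :=
      by fun_prop
    have hEbd : ∀ q : X × (Fin n → X), |exp (t * (f (Fin.cons q.1 q.2) - m))|
        ≤ exp (|t| * (B + B)) := by
      intro q
      rw [abs_of_nonneg (exp_nonneg _)]
      apply exp_le_exp.2
      calc t * (f (Fin.cons q.1 q.2) - m) ≤ |t * (f (Fin.cons q.1 q.2) - m)| := le_abs_self _
        _ ≤ |t| * (B + B) := by
            rw [abs_mul]
            apply mul_le_mul_of_nonneg_left _ (abs_nonneg t)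
            calc |f (Fin.cons q.1 q.2) - m| ≤ |f (Fin.cons q.1 q.2)| + |m| := abs_sub _ _
              _ ≤ B + B := add_le_add (hB _) hmB
    have hEint : Integrable (fun q : X × (Fin n → X) => exp (t * (f (Fin.cons q.1 q.2) - m)))
        (P.prod Q) := EMC_integrable_of_bdd hEpair hEbd
    -- inner bound
    have hinner : ∀ w, ∫ x, exp (t * (f (Fin.cons x w) - m)) ∂P
        ≤ exp (t ^ 2 * c ^ 2 / 8) * exp (t * (g w - m)) := by
      intro w
      have hsplit : ∀ x, exp (t * (f (Fin.cons x w) - m))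
          = exp (t * (g w - m)) * exp (t * (f (Fin.cons x w) - g w)) := by
        intro x
        rw [← exp_add]
        congr 1
        ring
      simp only [hsplit]
      rw [integral_const_mul]
      have hhoef : ∫ x, exp (t * (f (Fin.cons x w) - g w)) ∂P ≤ exp (t ^ 2 * c ^ 2 / 8) := by
        apply EMC_hoeffding_mgf P _ (by fun_prop) c t
        · intro x y
          have := hc (Fin.cons y w) 0 x
          rw [Fin.update_cons_zero] at this
          linarith
        · rw [integral_sub (hconsint w) (integrable_const _)]
          simp [hgdef]
      calc exp (t * (g w - m)) * ∫ x, exp (t * (f (Fin.cons x w) - g w)) ∂P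
          ≤ exp (t * (g w - m)) * exp (t ^ 2 * c ^ 2 / 8) :=
            mul_le_mul_of_nonneg_left hhoef (exp_nonneg _)
        _ = exp (t ^ 2 * c ^ 2 / 8) * exp (t * (g w - m)) := by ring
    -- measurability/integrability of the intermediate functions of w
    have hΦ_sm : StronglyMeasurable (fun w => ∫ x, exp (t * (f (Fin.cons x w) - m)) ∂P) :=
      hEpair.stronglyMeasurable.integral_prod_left'
    have hΦint : Integrable (fun w => ∫ x, exp (t * (f (Fin.cons x w) - m)) ∂P) Q := by
      apply EMC_integrable_of_bdd hΦ_sm.measurable (B := exp (|t| * (B + B)))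
      intro w
      calc |∫ x, exp (t * (f (Fin.cons x w) - m)) ∂P|
          ≤ ∫ x, |exp (t * (f (Fin.cons x w) - m))| ∂P := EMC_abs_integral_le_integral_abs
        _ ≤ ∫ _x, exp (|t| * (B + B)) ∂P := by
            apply integral_mono _ (integrable_const _) (fun x => hEbd (x, w))
            exact (EMC_integrable_of_bdd (by fun_prop) (fun x => hEbd (x, w))).abs
        _ = exp (|t| * (B + B)) := by simp
    have hΨint : Integrable (fun w => exp (t ^ 2 * c ^ 2 / 8) * exp (t * (g w - m))) Q := by
      apply EMC_integrable_of_bdd (by fun_prop)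
        (B := exp (t ^ 2 * c ^ 2 / 8) * exp (|t| * (B + B)))
      intro w
      rw [abs_of_nonneg (by positivity)]
      apply mul_le_mul_of_nonneg_left _ (exp_nonneg _)
      apply exp_le_exp.2
      calc t * (g w - m) ≤ |t * (g w - m)| := le_abs_self _
        _ ≤ |t| * (B + B) := by
            rw [abs_mul]
            apply mul_le_mul_of_nonneg_left _ (abs_nonneg t)
            calc |g w - m| ≤ |g w| + |m| := abs_sub _ _
              _ ≤ B + B := add_le_add (hgB _) hmB
    have hihg := ih g hg_meas B hgB c hgc t
    calc ∫ z, exp (t * (f z - m)) ∂P1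
        = ∫ q, exp (t * (f (Fin.cons q.1 q.2) - m)) ∂(P.prod Q) := by
          rw [← mp.integral_comp e.symm.measurableEmbedding]
          simp only [hesymm]
      _ = ∫ w, ∫ x, exp (t * (f (Fin.cons x w) - m)) ∂P ∂Q := integral_prod_symm _ hEint
      _ ≤ ∫ w, exp (t ^ 2 * c ^ 2 / 8) * exp (t * (g w - m)) ∂Q :=
          integral_mono hΦint hΨint hinner
      _ = exp (t ^ 2 * c ^ 2 / 8) * ∫ w, exp (t * (g w - m)) ∂Q := integral_const_mul _ _
      _ ≤ exp (t ^ 2 * c ^ 2 / 8) * exp (t ^ 2 * n * c ^ 2 / 8) := by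
          apply mul_le_mul_of_nonneg_left _ (exp_nonneg _)
          rw [hfub]
          exact hihg
      _ = exp (t ^ 2 * (n + 1 : ℕ) * c ^ 2 / 8) := by
          rw [← exp_add]
          congr 1
          push_cast
          ring




lemma EMC_mcdiarmid_tail {X : Type*} [MeasurableSpace X] (P : Measure X) [IsProbabilityMeasure P]
    (n : ℕ) (hn : 0 < n) (f : (Fin n → X) → ℝ) (hf : Measurable f)
    (B : ℝ) (hB : ∀ z, |f z| ≤ B)
    (c : ℝ) (hcpos : 0 < c)
    (hc : ∀ (z : Fin n → X) (i : Fin n) (x : X), f (Function.update z i x) - f z ≤ c)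
    (s : ℝ) (hs : 0 < s) :
    ((Measure.pi fun _ : Fin n => P)
      {z | s ≤ f z - ∫ z', f z' ∂(Measure.pi fun _ : Fin n => P)}).toReal
      ≤ exp (-2 * s ^ 2 / (n * c ^ 2)) := by
  set μ := (Measure.pi fun _ : Fin n => P) with hμ
  set m := ∫ z', f z' ∂μ with hm
  set t : ℝ := 4 * s / (n * c ^ 2) with ht
  have hnR : (0:ℝ) < n := Nat.cast_pos.2 hn
  have htpos : 0 < t := by positivity
  have hmB : |m| ≤ B := by
    have h1 : |m| ≤ ∫ z, |f z| ∂μ := by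
      simpa [Real.norm_eq_abs] using norm_integral_le_integral_norm (μ := μ) f
    have h2 : ∫ z, |f z| ∂μ ≤ ∫ _z, B ∂μ :=
      integral_mono (EMC_integrable_of_bdd hf hB).abs (integrable_const B) (fun z => hB z)
    simpa using h1.trans h2
  have hXm : Measurable (fun z => f z - m) := hf.sub_const m
  have hint : Integrable (fun z => exp (t * (f z - m))) μ := by
    apply EMC_integrable_of_bdd (by fun_prop) (B := exp (|t| * (B + B)))
    intro z
    rw [abs_of_nonneg (exp_nonneg _)]
    apply exp_le_exp.2
    calc t * (f z - m) ≤ |t * (f z - m)| := le_abs_self _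
      _ ≤ |t| * (B + B) := by
          rw [abs_mul]
          apply mul_le_mul_of_nonneg_left _ (abs_nonneg t)
          calc |f z - m| ≤ |f z| + |m| := abs_sub _ _
            _ ≤ B + B := add_le_add (hB z) hmB
  have hcher := measure_ge_le_exp_mul_mgf (μ := μ) (X := fun z => f z - m) s htpos.le hint
  have hmgf : mgf (fun z => f z - m) μ t ≤ exp (t ^ 2 * n * c ^ 2 / 8) :=
    EMC_mcdiarmid_mgf P n f hf B hB c hc t
  calc (μ {z | s ≤ f z - m}).toReal ≤ exp (-t * s) * mgf (fun z => f z - m) μ t := hcher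
    _ ≤ exp (-t * s) * exp (t ^ 2 * n * c ^ 2 / 8) :=
        mul_le_mul_of_nonneg_left hmgf (exp_nonneg _)
    _ = exp (-t * s + t ^ 2 * n * c ^ 2 / 8) := (exp_add _ _).symm
    _ = exp (-2 * s ^ 2 / (n * c ^ 2)) := by
        congr 1
        rw [ht]
        field_simp
        ring



lemma EMC_sq_integral_le {Ω : Type*} [MeasurableSpace Ω] {μ : Measure Ω} [IsProbabilityMeasure μ]
    (f : Ω → ℝ) (hf : Integrable f μ) (hf2 : Integrable (fun x => f x ^ 2) μ) :
    (∫ x, f x ∂μ) ^ 2 ≤ ∫ x, f x ^ 2 ∂μ := by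
  set m := ∫ x, f x ∂μ with hm
  have h0 : 0 ≤ ∫ x, (f x - m) ^ 2 ∂μ := integral_nonneg fun x => sq_nonneg _
  have hexp : ∫ x, (f x - m) ^ 2 ∂μ = (∫ x, f x ^ 2 ∂μ) - m ^ 2 := by
    have hpt : ∀ x, (f x - m) ^ 2 = f x ^ 2 - 2 * m * f x + m ^ 2 := fun x => by ring
    simp_rw [hpt]
    have ia : Integrable (fun x => f x ^ 2 - 2 * m * f x) μ := by
      exact hf2.sub (hf.const_mul (2 * m))
    have ib : Integrable (fun x => 2 * m * f x) μ := by exact hf.const_mul (2 * m)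
    rw [integral_add ia (integrable_const _), integral_sub hf2 ib, integral_const_mul]
    simp [← hm]
    ring
  linarith [hexp ▸ h0]

lemma EMC_moment2 {X : Type*} [MeasurableSpace X]
    {H : Type*} [NormedAddCommGroup H] [InnerProductSpace ℝ H] [CompleteSpace H]
    (P : Measure X) [IsProbabilityMeasure P]
    (Y : X → H) (hYsm : StronglyMeasurable Y) (b : ℝ) (hb0 : 0 ≤ b) (hb : ∀ x, ‖Y x‖ ≤ b)
    (hY0 : ∫ x, Y x ∂P = 0) (V : ℝ) (hV : ∫ x, ‖Y x‖ ^ 2 ∂P ≤ V) :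
    ∀ n : ℕ, ∫ z, ‖∑ i, Y (z i)‖ ^ 2 ∂(Measure.pi fun _ : Fin n => P) ≤ n * V := by
  have hV0 : 0 ≤ V := le_trans (integral_nonneg fun x => sq_nonneg _) hV
  have hYint : Integrable Y P :=
    (integrable_const b).mono' hYsm.aestronglyMeasurable (ae_of_all _ fun x => by simpa using hb x)
  intro n
  induction n with
  | zero => simp
  | succ n ih =>
    set Q : Measure (Fin n → X) := Measure.pi fun _ : Fin n => P with hQdef
    set P1 : Measure (Fin (n + 1) → X) := Measure.pi fun _ : Fin (n + 1) => P with hP1def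
    set e := MeasurableEquiv.piFinSuccAbove (fun _ : Fin (n + 1) => X) 0 with hedef
    have hesymm : ∀ q : X × (Fin n → X), e.symm q = Fin.cons q.1 q.2 := by
      intro q
      simp [hedef, MeasurableEquiv.piFinSuccAbove_symm_apply, Fin.insertNthEquiv,
        Fin.insertNth_zero']
    have mp : MeasurePreserving e.symm (P.prod Q) P1 :=
      (measurePreserving_piFinSuccAbove (fun _ : Fin (n + 1) => P) 0).symm
    set S : (Fin n → X) → H := fun w => ∑ i, Y (w i) with hSdef
    have hSsm : StronglyMeasurable S :=
      Finset.stronglyMeasurable_fun_sum _ fun i _ =>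
        hYsm.comp_measurable (measurable_pi_apply i)
    have hSb : ∀ w, ‖S w‖ ≤ n * b := by
      intro w
      calc ‖S w‖ ≤ ∑ i, ‖Y (w i)‖ := norm_sum_le _ _
        _ ≤ ∑ _i : Fin n, b := Finset.sum_le_sum fun i _ => hb (w i)
        _ = n * b := by simp [mul_comm]
    have hsplit : ∀ (x : X) (w : Fin n → X),
        (∑ i : Fin (n + 1), Y ((Fin.cons x w : Fin (n + 1) → X) i)) = Y x + S w := by
      intro x w
      rw [Fin.sum_univ_succ]
      simp only [Fin.cons_zero, Fin.cons_succ]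
      rfl
    have hpair_sm : StronglyMeasurable (fun q : X × (Fin n → X) => Y q.1 + S q.2) :=
      (hYsm.comp_measurable measurable_fst).add (hSsm.comp_measurable measurable_snd)
    have hpair_meas : Measurable (fun q : X × (Fin n → X) => ‖Y q.1 + S q.2‖ ^ 2) :=
      hpair_sm.norm.measurable.pow_const 2
    have hpair_bd : ∀ q : X × (Fin n → X), |‖Y q.1 + S q.2‖ ^ 2| ≤ (b + n * b) ^ 2 := by
      intro q
      rw [abs_of_nonneg (sq_nonneg _)]
      apply pow_le_pow_left₀ (norm_nonneg _)
      calc ‖Y q.1 + S q.2‖ ≤ ‖Y q.1‖ + ‖S q.2‖ := norm_add_le _ _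
        _ ≤ b + n * b := add_le_add (hb _) (hSb _)
    have hpair_int : Integrable (fun q : X × (Fin n → X) => ‖Y q.1 + S q.2‖ ^ 2) (P.prod Q) :=
      EMC_integrable_of_bdd hpair_meas hpair_bd
    have hinner : ∀ w, ∫ x, ‖Y x + S w‖ ^ 2 ∂P ≤ V + ‖S w‖ ^ 2 := by
      intro w
      have hpt : ∀ x, ‖Y x + S w‖ ^ 2 = ‖Y x‖ ^ 2 + 2 * ⟪S w, Y x⟫ + ‖S w‖ ^ 2 := by
        intro x
        rw [norm_add_sq_real, real_inner_comm]
      have i1 : Integrable (fun x => ‖Y x‖ ^ 2) P := by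
        apply EMC_integrable_of_bdd (hYsm.norm.measurable.pow_const 2) (B := b ^ 2)
        intro x
        rw [abs_of_nonneg (sq_nonneg _)]
        exact pow_le_pow_left₀ (norm_nonneg _) (hb x) 2
      have i2 : Integrable (fun x => 2 * ⟪S w, Y x⟫) P := (hYint.const_inner (S w)).const_mul 2
      simp_rw [hpt]
      have i12 : Integrable (fun x => ‖Y x‖ ^ 2 + 2 * ⟪S w, Y x⟫) P := by exact i1.add i2
      rw [integral_add i12 (integrable_const _), integral_add i1 i2,
        integral_const_mul, integral_inner hYint, hY0, inner_zero_right]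
      simp
      linarith [hV]
    have hΦ_sm : StronglyMeasurable (fun w => ∫ x, ‖Y x + S w‖ ^ 2 ∂P) :=
      hpair_meas.stronglyMeasurable.integral_prod_left'
    have hΦint : Integrable (fun w => ∫ x, ‖Y x + S w‖ ^ 2 ∂P) Q := by
      apply EMC_integrable_of_bdd hΦ_sm.measurable (B := (b + n * b) ^ 2)
      intro w
      have hmx : Measurable (fun x => ‖Y x + S w‖ ^ 2) :=
        hpair_meas.comp (measurable_id.prodMk measurable_const)
      have habs : ∀ x : X, |‖Y x + S w‖ ^ 2| = ‖Y x + S w‖ ^ 2 := fun x =>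
        abs_of_nonneg (sq_nonneg _)
      have h1 : |∫ x, ‖Y x + S w‖ ^ 2 ∂P| ≤ ∫ x, ‖Y x + S w‖ ^ 2 ∂P := by
        have := norm_integral_le_integral_norm (μ := P) (fun x => ‖Y x + S w‖ ^ 2)
        simpa [Real.norm_eq_abs, habs] using this
      refine h1.trans ?_
      calc ∫ x, ‖Y x + S w‖ ^ 2 ∂P ≤ ∫ _x, (b + n * b) ^ 2 ∂P := by
            apply integral_mono _ (integrable_const _)
              (fun x => (habs x) ▸ hpair_bd (x, w))
            exact EMC_integrable_of_bdd hmx (fun x => hpair_bd (x, w))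
        _ = (b + n * b) ^ 2 := by simp
    have hΨint : Integrable (fun w => V + ‖S w‖ ^ 2) Q := by
      apply Integrable.add (integrable_const V)
      apply EMC_integrable_of_bdd (hSsm.norm.measurable.pow_const 2) (B := (n * b) ^ 2)
      intro w
      rw [abs_of_nonneg (sq_nonneg _)]
      exact pow_le_pow_left₀ (norm_nonneg _) (hSb w) 2
    have hSint : Integrable (fun w => ‖S w‖ ^ 2) Q := by
      apply EMC_integrable_of_bdd (hSsm.norm.measurable.pow_const 2) (B := (n * b) ^ 2)
      intro w
      rw [abs_of_nonneg (sq_nonneg _)]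
      exact pow_le_pow_left₀ (norm_nonneg _) (hSb w) 2
    calc ∫ z, ‖∑ i, Y (z i)‖ ^ 2 ∂P1
        = ∫ q, ‖Y q.1 + S q.2‖ ^ 2 ∂(P.prod Q) := by
          rw [← mp.integral_comp e.symm.measurableEmbedding]
          congr 1
          funext q
          rw [hesymm q, hsplit]
      _ = ∫ w, ∫ x, ‖Y x + S w‖ ^ 2 ∂P ∂Q := integral_prod_symm _ hpair_int
      _ ≤ ∫ w, (V + ‖S w‖ ^ 2) ∂Q := integral_mono hΦint hΨint hinner
      _ = V + ∫ w, ‖S w‖ ^ 2 ∂Q := by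
          rw [integral_add (integrable_const V) hSint]
          simp
      _ ≤ V + n * V := by linarith [ih]
      _ = ((n + 1 : ℕ) : ℝ) * V := by push_cast; ring

end EMCAux
/-- With probability at least `1 − δ` over an i.i.d. sample of size `n_t` from `P_t`,
the empirical embedding mean is within `√(M/n_t) (1 + √(2 log(1/δ)))` of the
population embedding mean `μ_t`. -/
theorem embedding_mean_concentration
    {X : Type*} [MeasurableSpace X]
    {H : Type*} [NormedAddCommGroup H] [InnerProductSpace ℝ H] [CompleteSpace H]
    (M : ℝ) (hM : 0 < M)
    (φ : X → H) (hφsm : StronglyMeasurable φ) (hφ : ∀ x, ‖φ x‖ ≤ Real.sqrt M)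
    (Pt : Measure X) [IsProbabilityMeasure Pt]
    (hint : Integrable φ Pt)
    (nt : ℕ) (hnt : 0 < nt)
    (μt : H) (hμt : μt = ∫ x, φ x ∂Pt)
    (δ : ℝ) (hδ : δ ∈ Set.Ioo (0 : ℝ) 1) :
    (Measure.pi fun _ : Fin nt => Pt)
      {zs | ‖(1 / (nt : ℝ)) • ∑ i, φ (zs i) - μt‖
          ≤ Real.sqrt (M / nt) * (1 + Real.sqrt (2 * Real.log (1 / δ)))}
      ≥ ENNReal.ofReal (1 - δ) := by
  obtain ⟨hδ0, hδ1⟩ := hδ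
  set Pi : Measure (Fin nt → X) := Measure.pi fun _ : Fin nt => Pt with hPidef
  set Y : X → H := fun x => φ x - μt with hYdef
  set f : (Fin nt → X) → ℝ := fun z => ‖∑ i, Y (z i)‖ with hfdef
  have hntR : (0 : ℝ) < nt := Nat.cast_pos.2 hnt
  have hsqM : (0:ℝ) < Real.sqrt M := Real.sqrt_pos.2 hM
  -- basic facts
  have hμnorm : ‖μt‖ ≤ Real.sqrt M := by
    rw [hμt]
    calc ‖∫ x, φ x ∂Pt‖ ≤ ∫ x, ‖φ x‖ ∂Pt := norm_integral_le_integral_norm _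
      _ ≤ ∫ _x, Real.sqrt M ∂Pt := integral_mono hint.norm (integrable_const _) hφ
      _ = Real.sqrt M := by simp
  have hYsm : StronglyMeasurable Y := hφsm.sub stronglyMeasurable_const
  have hYb : ∀ x, ‖Y x‖ ≤ 2 * Real.sqrt M := by
    intro x
    calc ‖φ x - μt‖ ≤ ‖φ x‖ + ‖μt‖ := norm_sub_le _ _
      _ ≤ 2 * Real.sqrt M := by linarith [hφ x, hμnorm]
  have hY0 : ∫ x, Y x ∂Pt = 0 := by
    rw [hYdef]
    simp only
    rw [integral_sub hint (integrable_const μt)]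
    simp [← hμt]
  have hV : ∫ x, ‖Y x‖ ^ 2 ∂Pt ≤ M := by
    have hpt : ∀ x, ‖Y x‖ ^ 2 = ‖φ x‖ ^ 2 - 2 * ⟪μt, φ x⟫ + ‖μt‖ ^ 2 := by
      intro x
      rw [hYdef]
      simp only
      rw [norm_sub_sq_real, real_inner_comm]
    have i1 : Integrable (fun x => ‖φ x‖ ^ 2) Pt := by
      apply EMC_integrable_of_bdd (hφsm.norm.measurable.pow_const 2) (B := M)
      intro x
      rw [abs_of_nonneg (sq_nonneg _)]
      calc ‖φ x‖ ^ 2 ≤ Real.sqrt M ^ 2 := by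
            apply pow_le_pow_left₀ (norm_nonneg _) (hφ x)
        _ = M := Real.sq_sqrt hM.le
    have i2 : Integrable (fun x => 2 * ⟪μt, φ x⟫) Pt := (hint.const_inner μt).const_mul 2
    have hi12 : Integrable (fun x => ‖φ x‖ ^ 2 - 2 * ⟪μt, φ x⟫) Pt := i1.sub i2
    simp_rw [hpt]
    rw [integral_add hi12 (integrable_const _), integral_sub i1 i2, integral_const_mul,
      integral_inner hint, ← hμt, real_inner_self_eq_norm_sq]
    have h1 : ∫ x, ‖φ x‖ ^ 2 ∂Pt ≤ M := by
      calc ∫ x, ‖φ x‖ ^ 2 ∂Pt ≤ ∫ _x, M ∂Pt := by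
            apply integral_mono i1 (integrable_const _)
            intro x
            calc ‖φ x‖ ^ 2 ≤ Real.sqrt M ^ 2 := pow_le_pow_left₀ (norm_nonneg _) (hφ x) 2
              _ = M := Real.sq_sqrt hM.le
        _ = M := by simp
    simp only [integral_const, measure_univ, ENNReal.toReal_one, smul_eq_mul, one_mul, probReal_univ]
    nlinarith [norm_nonneg μt]
  -- properties of f
  have hSsm : StronglyMeasurable (fun z : Fin nt → X => ∑ i, Y (z i)) :=
    Finset.stronglyMeasurable_fun_sum _ fun i _ => hYsm.comp_measurable (measurable_pi_apply i)
  have hfm : Measurable f := hSsm.norm.measurable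
  have hfB : ∀ z, |f z| ≤ nt * (2 * Real.sqrt M) := by
    intro z
    rw [hfdef]
    simp only
    rw [abs_of_nonneg (norm_nonneg _)]
    calc ‖∑ i, Y (z i)‖ ≤ ∑ i, ‖Y (z i)‖ := norm_sum_le _ _
      _ ≤ ∑ _i : Fin nt, 2 * Real.sqrt M := Finset.sum_le_sum fun i _ => hYb _
      _ = nt * (2 * Real.sqrt M) := by simp [mul_comm]
  have hfc : ∀ (z : Fin nt → X) (i : Fin nt) (x : X),
      f (Function.update z i x) - f z ≤ 2 * Real.sqrt M := by
    intro z i x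
    have hupd : (fun j => Y (Function.update z i x j))
        = Function.update (fun j => Y (z j)) i (Y x) := by
      funext j
      by_cases h : j = i
      · subst h; simp
      · simp [Function.update_apply, h]
    have hsum : ∑ j, Y (Function.update z i x j) - ∑ j, Y (z j) = Y x - Y (z i) := by
      rw [hupd, Finset.sum_update_of_mem (Finset.mem_univ i)]
      rw [← Finset.sum_erase_add Finset.univ _ (Finset.mem_univ i)]
      have : Finset.univ \ {i} = Finset.univ.erase i := by
        ext j; simp [Finset.mem_erase, and_comm]
      rw [this]
      abel
    calc f (Function.update z i x) - f z
        ≤ ‖∑ j, Y (Function.update z i x j) - ∑ j, Y (z j)‖ := norm_sub_norm_le _ _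
      _ = ‖Y x - Y (z i)‖ := by rw [hsum]
      _ = ‖φ x - φ (z i)‖ := by rw [hYdef]; simp only; congr 1; abel
      _ ≤ ‖φ x‖ + ‖φ (z i)‖ := norm_sub_le _ _
      _ ≤ 2 * Real.sqrt M := by linarith [hφ x, hφ (z i)]
  -- mean of f is at most √(nt M)
  set m : ℝ := ∫ z, f z ∂Pi with hmdef
  have hfint : Integrable f Pi := EMC_integrable_of_bdd hfm hfB
  have hf2int : Integrable (fun z => f z ^ 2) Pi := by
    apply EMC_integrable_of_bdd (hfm.pow_const 2) (B := (nt * (2 * Real.sqrt M)) ^ 2)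
    intro z
    rw [abs_of_nonneg (sq_nonneg _)]
    apply pow_le_pow_left₀ (norm_nonneg _)
    have := hfB z
    rwa [abs_of_nonneg (norm_nonneg _)] at this
  have hm0 : 0 ≤ m := integral_nonneg fun z => norm_nonneg _
  have hmoment := EMC_moment2 Pt Y hYsm (2 * Real.sqrt M) (by positivity) hYb hY0 M hV nt
  have hm2 : m ^ 2 ≤ nt * M := by
    calc m ^ 2 ≤ ∫ z, f z ^ 2 ∂Pi := EMC_sq_integral_le f hfint hf2int
      _ = ∫ z, ‖∑ i, Y (z i)‖ ^ 2 ∂Pi := by rw [hfdef]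
      _ ≤ nt * M := hmoment
  have hmle : m ≤ Real.sqrt (nt * M) := by
    have h := Real.sqrt_le_sqrt hm2
    rwa [Real.sqrt_sq hm0] at h
  -- tail bound
  set s0 : ℝ := Real.sqrt (2 * Real.log (1 / δ)) with hs0def
  set s : ℝ := Real.sqrt (nt * M) * s0 with hsdef
  have hlogpos : 0 < Real.log (1 / δ) := Real.log_pos (by rw [lt_div_iff₀ hδ0]; linarith)
  have hs0pos : 0 < s0 := Real.sqrt_pos.2 (by linarith)
  have hspos : 0 < s := by
    apply mul_pos (Real.sqrt_pos.2 (by positivity)) hs0pos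
  have htail := EMC_mcdiarmid_tail Pt nt hnt f hfm _ hfB (2 * Real.sqrt M) (by positivity) hfc
    s hspos
  have htail2 : (Pi {z | s ≤ f z - m}).toReal ≤ δ := by
    refine le_trans htail ?_
    have hexp : -2 * s ^ 2 / (nt * (2 * Real.sqrt M) ^ 2) = Real.log δ := by
      have h1 : s ^ 2 = nt * M * (2 * Real.log (1 / δ)) := by
        rw [hsdef, mul_pow, Real.sq_sqrt (by positivity), hs0def,
          Real.sq_sqrt (by linarith)]
      have h2 : (2 * Real.sqrt M) ^ 2 = 4 * M := by
        rw [mul_pow, Real.sq_sqrt hM.le]; ring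
      rw [h1, h2]
      have h3 : Real.log (1 / δ) = -Real.log δ := by
        rw [one_div, Real.log_inv]
      rw [h3]
      field_simp
      ring
    rw [hexp, Real.exp_log hδ0]
  -- event inclusion
  set A : Set (Fin nt → X) := {zs | ‖(1 / (nt : ℝ)) • ∑ i, φ (zs i) - μt‖
      ≤ Real.sqrt (M / nt) * (1 + s0)} with hAdef
  have hnorm_eq : ∀ z : Fin nt → X,
      ‖(1 / (nt : ℝ)) • ∑ i, φ (z i) - μt‖ = (1 / (nt : ℝ)) * f z := by
    intro z
    have h1 : (1 / (nt : ℝ)) • ∑ i, φ (z i) - μt = (1 / (nt : ℝ)) • ∑ i, Y (z i) := by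
      rw [hYdef]
      simp only
      rw [Finset.sum_sub_distrib, smul_sub, Finset.sum_const, Finset.card_univ,
        Fintype.card_fin]
      congr 1
      rw [← Nat.cast_smul_eq_nsmul ℝ nt μt, smul_smul]
      rw [one_div, inv_mul_cancel₀ (ne_of_gt hntR), one_smul]
    rw [h1, norm_smul, Real.norm_eq_abs, abs_of_nonneg (by positivity : (0:ℝ) ≤ 1 / nt)]
  have hkey : Real.sqrt (nt * M) / nt = Real.sqrt (M / nt) := by
    rw [show M / (nt : ℝ) = (nt * M) / (nt:ℝ)^2 by field_simp,
      Real.sqrt_div (by positivity), Real.sqrt_sq hntR.le]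
  have hsub : {z | s ≤ f z - m}ᶜ ⊆ A := by
    intro z hz
    simp only [Set.mem_compl_iff, Set.mem_setOf_eq, not_le] at hz
    have hfz : f z ≤ Real.sqrt (nt * M) + s := by linarith
    rw [hAdef, Set.mem_setOf_eq, hnorm_eq z]
    calc (1 / (nt:ℝ)) * f z ≤ (1 / (nt:ℝ)) * (Real.sqrt (nt * M) + s) := by
          apply mul_le_mul_of_nonneg_left hfz (by positivity)
      _ = Real.sqrt (M / nt) * (1 + s0) := by
          rw [hsdef, ← hkey]
          field_simp
  -- measurability of A
  have hA : MeasurableSet A := by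
    have hsm : StronglyMeasurable (fun z : Fin nt → X =>
        ‖(1 / (nt : ℝ)) • ∑ i, φ (z i) - μt‖) := by
      apply StronglyMeasurable.norm
      apply StronglyMeasurable.sub _ stronglyMeasurable_const
      apply StronglyMeasurable.const_smul
      exact Finset.stronglyMeasurable_fun_sum _ fun i _ =>
        hφsm.comp_measurable (measurable_pi_apply i)
    exact hsm.measurable measurableSet_Iic
  -- conclude
  have hbadmeas : Pi {z | s ≤ f z - m} ≤ ENNReal.ofReal δ := by
    rw [← ENNReal.le_ofReal_iff_toReal_le (measure_ne_top _ _) hδ0.le] at htail2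
    exact htail2
  have hAc : Pi Aᶜ ≤ ENNReal.ofReal δ := by
    refine le_trans (measure_mono ?_) hbadmeas
    rw [← compl_compl {z | s ≤ f z - m}]
    exact Set.compl_subset_compl.2 hsub
  have hPA : Pi A = 1 - Pi Aᶜ := by
    have := prob_compl_eq_one_sub (μ := Pi) hA.compl
    rwa [compl_compl] at this
  calc ENNReal.ofReal (1 - δ) = 1 - ENNReal.ofReal δ := by
        rw [← ENNReal.ofReal_one, ← ENNReal.ofReal_sub _ hδ0.le]
    _ ≤ 1 - Pi Aᶜ := tsub_le_tsub_left hAc 1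
    _ = Pi A := hPA.symm
end

section
/- Let Q be a probability measure on X such that φ is Bochner integrable with respect to Q, with embedding mean μ_Q = ∫ φ dQ, and let ν ∈ H be any vector with ‖μ_Q − ν‖ ≤ ε. Let the loss ℓ : X → ℝ be induced by an element F ∈ H of the RKHS, i.e., ℓ(x) = ⟪F, φ(x)⟫ for all x. Then ∫ ℓ dQ = ⟪F, μ_Q⟫ ≤ ⟪F, ν⟫ + ε ‖F‖. In particular, if ν is the embedding mean of a (possibly weighted empirical) probability measure P̂, then E^Q[ℓ] ≤ E^{P̂}[ℓ] + ε ‖F‖, so the worst-case risk over the MMD ball of radius ε centered at P̂ is at most E^{P̂}[ℓ] + ε ‖F‖. -/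
open MeasureTheory
open scoped RealInnerProductSpace BigOperators

/-- If the loss `ℓ` is induced by `F ∈ H` (i.e. `ℓ(x) = ⟪F, φ(x)⟫`) and the embedding
mean `μ_Q` of `Q` is within `ε` of `ν`, then
`∫ ℓ dQ = ⟪F, μ_Q⟫ ≤ ⟪F, ν⟫ + ε ‖F‖`. -/
theorem risk_bound_via_embedding_means
    {X : Type*} [MeasurableSpace X]
    {H : Type*} [NormedAddCommGroup H] [InnerProductSpace ℝ H] [CompleteSpace H]
    (φ : X → H)
    (Q : Measure X) [IsProbabilityMeasure Q]
    (hφint : Integrable φ Q)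
    (μQ : H) (hμQ : μQ = ∫ x, φ x ∂Q)
    (ν : H) (ε : ℝ) (hν : ‖μQ - ν‖ ≤ ε)
    (ℓ : X → ℝ) (F : H) (hℓ : ∀ x, ℓ x = ⟪F, φ x⟫) :
    (∫ x, ℓ x ∂Q) = ⟪F, μQ⟫ ∧ ⟪F, μQ⟫ ≤ ⟪F, ν⟫ + ε * ‖F‖ := by
  constructor
  · simp only [hℓ, hμQ]
    exact integral_inner (𝕜 := ℝ) hφint F
  · have h1 : ⟪F, μQ⟫ - ⟪F, ν⟫ = ⟪F, μQ - ν⟫ := (inner_sub_right F μQ ν).symm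
    have h2 : ⟪F, μQ - ν⟫ ≤ ‖F‖ * ‖μQ - ν‖ := real_inner_le_norm F (μQ - ν)
    nlinarith [norm_nonneg F, norm_nonneg (μQ - ν)]
end

section
/- (Theorem 1, risk part.) Let P_s and P_t be probability measures on X with P_t absolutely continuous with respect to P_s, density ratio w = dP_t/dP_s satisfying 0 ≤ w(x) ≤ B for all x, and φ Bochner integrable with respect to P_t. Let x_1,…,x_{n_s} be i.i.d. from P_s and, independently, z_1,…,z_{n_t} be i.i.d. from P_t. Let the loss ℓ : X → ℝ satisfy ℓ(x) = ⟪F, φ(x)⟫ for some F ∈ H. For δ ∈ (0,1) set ε_{t'} = √M · ( √(B²/n_s + 1/n_t) + √(1/n_t) ) · (1 + √(2 log(1/δ))). Then with probability at least 1 − 2δ, the target population risk is bounded by the weighted empirical source risk plus ε_{t'} ‖F‖: ∫ ℓ dP_t ≤ (1/n_s) Σ_{i=1}^{n_s} w(x_i) ℓ(x_i) + ε_{t'} ‖F‖. -/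
open MeasureTheory
open scoped RealInnerProductSpace BigOperators NNReal ENNReal

/-- The key scalar inequality behind Hoeffding's lemma. -/
private lemma key_ineq {p : ℝ} (hp0 : 0 ≤ p) (hp1 : p ≤ 1) (h : ℝ) :
    (1 - p) * Real.exp (-p * h) + p * Real.exp ((1 - p) * h) ≤ Real.exp (h ^ 2 / 8) := by
  have hexp8 : (1 : ℝ) ≤ Real.exp (h ^ 2 / 8) := Real.one_le_exp (by positivity)
  rcases eq_or_lt_of_le hp0 with h0 | h0
  · simp only [← h0]
    simpa using hexp8
  rcases eq_or_lt_of_le hp1 with h1 | h1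
  · simp only [h1]
    simpa using hexp8
  set q : ℝ → ℝ := fun x => 1 - p + p * Real.exp x with hqdef
  have hq : ∀ x, 0 < q x := fun x => by
    have := Real.exp_pos x
    simp only [hqdef]
    nlinarith
  have hq1 : q 0 = 1 := by simp [hqdef]
  have hderiv_q : ∀ x, HasDerivAt q (p * Real.exp x) x := fun x => by
    exact ((Real.hasDerivAt_exp x).const_mul p).const_add (1 - p)
  set f : ℝ → ℝ := fun x => x ^ 2 / 8 + p * x - Real.log (q x) with hfdef
  set f1 : ℝ → ℝ := fun x => x / 4 + p - p * Real.exp x / q x with hf1def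
  have hderiv_f : ∀ x, HasDerivAt f (f1 x) x := fun x => by
    have h1 : HasDerivAt (fun y : ℝ => y ^ 2 / 8) (x / 4) x := by
      have := (hasDerivAt_pow 2 x).div_const 8
      convert this using 1
      norm_num
      · rfl
      · rfl
      · norm_num
        ring
    have h2 : HasDerivAt (fun y : ℝ => p * y) p x := by
      simpa using (hasDerivAt_id x).const_mul p
    have h3 : HasDerivAt (fun y => Real.log (q y)) (p * Real.exp x / q x) x :=
      (hderiv_q x).log (hq x).ne'
    exact (h1.add h2).sub h3
  have hderiv_f1 : ∀ x, HasDerivAt f1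
      (1 / 4 - (p * Real.exp x * q x - p * Real.exp x * (p * Real.exp x)) / q x ^ 2) x := fun x => by
    have h4 : HasDerivAt (fun y : ℝ => y / 4 + p) (1 / 4) x := by
      simpa using ((hasDerivAt_id x).div_const 4).add_const p
    have h5 : HasDerivAt (fun y => p * Real.exp y / q y)
        ((p * Real.exp x * q x - p * Real.exp x * (p * Real.exp x)) / q x ^ 2) x :=
      ((Real.hasDerivAt_exp x).const_mul p).div (hderiv_q x) (hq x).ne'
    exact h4.sub h5
  have hf2 : ∀ x, 0 ≤
      1 / 4 - (p * Real.exp x * q x - p * Real.exp x * (p * Real.exp x)) / q x ^ 2 := fun x => by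
    rw [sub_nonneg, div_le_iff₀ (pow_pos (hq x) 2)]
    have hex := Real.exp_pos x
    simp only [hqdef]
    nlinarith [sq_nonneg (1 - p - p * Real.exp x)]
  have hmono : Monotone f1 :=
    monotone_of_deriv_nonneg (fun x => (hderiv_f1 x).differentiableAt) fun x => by
      rw [(hderiv_f1 x).deriv]; exact hf2 x
  have hf1_0 : f1 0 = 0 := by
    simp [hf1def, hq1]
  have hdf : Differentiable ℝ f := fun x => (hderiv_f x).differentiableAt
  have hf0 : f 0 = 0 := by simp [hfdef, hq1]
  have hfnonneg : ∀ x, 0 ≤ f x := by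
    intro x
    rcases le_total 0 x with hx | hx
    · have hm : MonotoneOn f (Set.Ici 0) := by
        apply monotoneOn_of_deriv_nonneg (convex_Ici 0) hdf.continuous.continuousOn
          (fun y _ => (hderiv_f y).differentiableAt.differentiableWithinAt)
        intro y hy
        rw [interior_Ici] at hy
        rw [(hderiv_f y).deriv]
        rw [← hf1_0]
        exact hmono (le_of_lt hy)
      have := hm (Set.self_mem_Ici) (Set.mem_Ici.2 hx) hx
      rwa [hf0] at this
    · have hm : AntitoneOn f (Set.Iic 0) := by
        apply antitoneOn_of_deriv_nonpos (convex_Iic 0) hdf.continuous.continuousOn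
          (fun y _ => (hderiv_f y).differentiableAt.differentiableWithinAt)
        intro y hy
        rw [interior_Iic] at hy
        rw [(hderiv_f y).deriv]
        rw [← hf1_0]
        exact hmono (le_of_lt hy)
      have := hm (Set.mem_Iic.2 hx) (Set.self_mem_Iic) hx
      rwa [hf0] at this
  have hkey : Real.log (q h) - p * h ≤ h ^ 2 / 8 := by
    have := hfnonneg h
    simp only [hfdef] at this
    linarith
  calc (1 - p) * Real.exp (-p * h) + p * Real.exp ((1 - p) * h)
      = Real.exp (-p * h) * q h := by
        simp only [hqdef]
        rw [show (1 - p) * h = h + -p * h by ring, Real.exp_add]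
        ring
    _ = Real.exp (-p * h + Real.log (q h)) := by rw [Real.exp_add, Real.exp_log (hq h)]
    _ ≤ Real.exp (h ^ 2 / 8) := Real.exp_le_exp.2 (by linarith)

/-- Hoeffding's lemma: the mgf bound for a bounded mean-zero random variable. -/
private lemma mgf_bound {Ω : Type*} [MeasurableSpace Ω] {μ : Measure Ω} [IsProbabilityMeasure μ]
    {Y : Ω → ℝ} (hY : Measurable Y) {a b : ℝ} (hab : a ≤ b)
    (hbound : ∀ ω, Y ω ∈ Set.Icc a b) (hmean : ∫ ω, Y ω ∂μ = 0) (t : ℝ) :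
    ∫ ω, Real.exp (t * Y ω) ∂μ ≤ Real.exp (t ^ 2 * (b - a) ^ 2 / 8) := by
  have habs : ∀ ω, |Y ω| ≤ max |a| |b| := fun ω => by
    rcases hbound ω with ⟨h1, h2⟩
    have ha1 := neg_abs_le a
    have hb1 := le_abs_self b
    have ha2 := le_max_left |a| |b|
    have hb2 := le_max_right |a| |b|
    rw [abs_le]
    exact ⟨by linarith, by linarith⟩
  have hYint : Integrable Y μ := by
    refine Integrable.mono' (integrable_const (max |a| |b|)) hY.aestronglyMeasurable
      (ae_of_all _ fun ω => ?_)
    rw [Real.norm_eq_abs]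
    exact habs ω
  have ha0 : a ≤ 0 := by
    have h := integral_mono (integrable_const a) hYint fun ω => (hbound ω).1
    rwa [integral_const, probReal_univ, one_smul, hmean] at h
  have hb0 : 0 ≤ b := by
    have h := integral_mono hYint (integrable_const b) fun ω => (hbound ω).2
    rwa [integral_const, probReal_univ, one_smul, hmean] at h
  rcases eq_or_lt_of_le hab with heq | hlt
  · have ha : a = 0 := le_antisymm ha0 (heq ▸ hb0)
    have hb : b = 0 := heq ▸ ha
    have hY0 : ∀ ω, Y ω = 0 := fun ω =>
      le_antisymm ((hbound ω).2.trans_eq hb) (ha ▸ (hbound ω).1)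
    simp only [hY0, mul_zero, Real.exp_zero, integral_const, probReal_univ,
      ENNReal.toReal_one, one_smul]
    exact Real.one_le_exp (by positivity)
  have hba : 0 < b - a := sub_pos.2 hlt
  -- pointwise convexity bound
  have hconv : ∀ ω, Real.exp (t * Y ω) ≤
      (Real.exp (t * b) - Real.exp (t * a)) / (b - a) * Y ω
        + (b * Real.exp (t * a) - a * Real.exp (t * b)) / (b - a) := by
    intro ω
    rcases hbound ω with ⟨h1, h2⟩
    have hsum1 : (b - Y ω) / (b - a) + (Y ω - a) / (b - a) = 1 := by
      rw [← add_div, div_eq_one_iff_eq hba.ne']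
      ring
    have key := convexOn_exp.2 (Set.mem_univ (t * a)) (Set.mem_univ (t * b))
      (div_nonneg (by linarith : (0:ℝ) ≤ b - Y ω) hba.le)
      (div_nonneg (by linarith : (0:ℝ) ≤ Y ω - a) hba.le) hsum1
    simp only [smul_eq_mul] at key
    have harg : (b - Y ω) / (b - a) * (t * a) + (Y ω - a) / (b - a) * (t * b) = t * Y ω := by
      field_simp
      ring
    rw [harg] at key
    refine key.trans (le_of_eq ?_)
    field_simp
    ring
  have hexp_int : Integrable (fun ω => Real.exp (t * Y ω)) μ := by
    refine Integrable.mono' (integrable_const (Real.exp (|t| * max |a| |b|)))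
      (Real.measurable_exp.comp (hY.const_mul t)).aestronglyMeasurable
      (ae_of_all _ fun ω => ?_)
    rw [Real.norm_eq_abs, Real.abs_exp]
    apply Real.exp_le_exp.2
    calc t * Y ω ≤ |t * Y ω| := le_abs_self _
      _ = |t| * |Y ω| := abs_mul _ _
      _ ≤ |t| * max |a| |b| := mul_le_mul_of_nonneg_left (habs ω) (abs_nonneg t)
  have hstep : ∫ ω, Real.exp (t * Y ω) ∂μ
      ≤ (b * Real.exp (t * a) - a * Real.exp (t * b)) / (b - a) := by
    have hint2 : Integrable (fun ω => (Real.exp (t * b) - Real.exp (t * a)) / (b - a) * Y ω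
        + (b * Real.exp (t * a) - a * Real.exp (t * b)) / (b - a)) μ :=
      (hYint.const_mul _).add (integrable_const _)
    have h := integral_mono hexp_int hint2 hconv
    rwa [integral_add (hYint.const_mul _) (integrable_const _), integral_const_mul, hmean,
      mul_zero, zero_add, integral_const, probReal_univ, one_smul] at h
  have hp0 : 0 ≤ -a / (b - a) := div_nonneg (by linarith) hba.le
  have hp1 : -a / (b - a) ≤ 1 := (div_le_one hba).2 (by linarith)
  have hk := key_ineq hp0 hp1 (t * (b - a))
  have he1 : -(-a / (b - a)) * (t * (b - a)) = t * a := by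
    field_simp
  have he2 : (1 - -a / (b - a)) * (t * (b - a)) = t * b := by
    field_simp
    ring
  have he3 : (t * (b - a)) ^ 2 / 8 = t ^ 2 * (b - a) ^ 2 / 8 := by ring
  rw [he1, he2, he3] at hk
  refine hstep.trans (le_trans (le_of_eq ?_) hk)
  field_simp
  ring

/-- Integral of an i.i.d. product over a finite product measure. -/
private lemma integral_prod_pi {X : Type*} [MeasurableSpace X] (Ps : Measure X)
    [IsProbabilityMeasure Ps] (g : X → ℝ) (n : ℕ) :
    ∫ v : Fin n → X, ∏ i, g (v i) ∂(Measure.pi fun _ => Ps) = (∫ x, g x ∂Ps) ^ n := by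
  letI : MeasureSpace X := ⟨Ps⟩
  haveI : SigmaFinite (volume : Measure X) := inferInstanceAs (SigmaFinite Ps)
  simpa using MeasureTheory.integral_fintype_prod_eq_pow (ι := Fin n) g (μ := Ps)

/-- Theorem 1 (risk part): with probability at least `1 − 2δ`, the target population
risk is bounded by the weighted empirical source risk plus `ε_{t'} ‖F‖`. -/
theorem target_risk_bounded_by_weighted_empirical_source_risk
    {X : Type*} [MeasurableSpace X]
    {H : Type*} [NormedAddCommGroup H] [InnerProductSpace ℝ H] [CompleteSpace H]
    (M B : ℝ) (hM : 0 < M) (hB : 0 < B)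
    (φ : X → H) (hφsm : StronglyMeasurable φ) (hφ : ∀ x, ‖φ x‖ ≤ Real.sqrt M)
    (Ps Pt : Measure X) [IsProbabilityMeasure Ps] [IsProbabilityMeasure Pt]
    (w : X → ℝ) (hwmeas : Measurable w) (hw : ∀ x, 0 ≤ w x ∧ w x ≤ B)
    (hPt : Pt = Ps.withDensity fun x => ENNReal.ofReal (w x))
    (hint : Integrable φ Pt)
    (ℓ : X → ℝ) (F : H) (hℓ : ∀ x, ℓ x = ⟪F, φ x⟫)
    (ns nt : ℕ) (hns : 0 < ns) (hnt : 0 < nt)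
    (δ : ℝ) (hδ : δ ∈ Set.Ioo (0 : ℝ) 1)
    (ε : ℝ)
    (hε : ε = Real.sqrt M * (Real.sqrt (B ^ 2 / ns + 1 / nt) + Real.sqrt (1 / nt))
          * (1 + Real.sqrt (2 * Real.log (1 / δ)))) :
    ((Measure.pi fun _ : Fin ns => Ps).prod (Measure.pi fun _ : Fin nt => Pt))
      {p : (Fin ns → X) × (Fin nt → X) |
        (∫ x, ℓ x ∂Pt) ≤ (1 / (ns : ℝ)) * ∑ i, w (p.1 i) * ℓ (p.1 i) + ε * ‖F‖}
      ≥ ENNReal.ofReal (1 - 2 * δ) := by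
  obtain ⟨hδ0, hδ1⟩ := hδ
  rw [ge_iff_le]
  -- trivial case F = 0
  by_cases hF : F = 0
  · have hl0 : ∀ x, ℓ x = 0 := fun x => by rw [hℓ x, hF, inner_zero_left]
    have huniv : {p : (Fin ns → X) × (Fin nt → X) |
        (∫ x, ℓ x ∂Pt) ≤ (1 / (ns : ℝ)) * ∑ i, w (p.1 i) * ℓ (p.1 i) + ε * ‖F‖}
        = Set.univ := by
      ext p
      simp [hl0, hF]
    rw [huniv, measure_univ]
    exact ENNReal.ofReal_le_one.2 (by linarith)
  have hFn : 0 < ‖F‖ := norm_pos_iff.2 hF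
  have hns' : (0:ℝ) < ns := by exact_mod_cast hns
  have hnt' : (0:ℝ) < nt := by exact_mod_cast hnt
  have hsM : 0 < Real.sqrt M := Real.sqrt_pos.2 hM
  set L := Real.log (1 / δ) with hLdef
  have hL0 : 0 ≤ L := Real.log_nonneg (by rw [le_div_iff₀ hδ0]; linarith)
  have hε0 : 0 < ε := by
    rw [hε]
    have h1 : 0 < Real.sqrt (B ^ 2 / ns + 1 / nt) := Real.sqrt_pos.2
      (add_pos (div_pos (pow_pos hB 2) hns') (div_pos one_pos hnt'))
    have h2 : 0 ≤ Real.sqrt (1 / (nt:ℝ)) := Real.sqrt_nonneg _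
    have h3 : 0 ≤ Real.sqrt (2 * L) := Real.sqrt_nonneg _
    exact mul_pos (mul_pos hsM (by linarith)) (by linarith)
  -- key lower bound on ε
  have hε_ge : Real.sqrt M * Real.sqrt (B ^ 2 / ns) * Real.sqrt (2 * L) ≤ ε := by
    rw [hε]
    have h1 : Real.sqrt (B ^ 2 / ns)
        ≤ Real.sqrt (B ^ 2 / ns + 1 / nt) + Real.sqrt (1 / (nt:ℝ)) := by
      have h1a : Real.sqrt (B ^ 2 / ns) ≤ Real.sqrt (B ^ 2 / ns + 1 / nt) :=
        Real.sqrt_le_sqrt (le_add_of_nonneg_right (by positivity))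
      linarith [Real.sqrt_nonneg (1 / (nt:ℝ))]
    have h2 : Real.sqrt (2 * L) ≤ 1 + Real.sqrt (2 * L) := by linarith
    gcongr
  have hεsq : 2 * B ^ 2 * M * L ≤ (ns : ℝ) * ε ^ 2 := by
    have hx0 : 0 ≤ Real.sqrt M * Real.sqrt (B ^ 2 / ns) * Real.sqrt (2 * L) := by positivity
    have hsq := pow_le_pow_left₀ hx0 hε_ge 2
    have hexp : (Real.sqrt M * Real.sqrt (B ^ 2 / ns) * Real.sqrt (2 * L)) ^ 2
        = M * (B ^ 2 / ns) * (2 * L) := by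
      rw [mul_pow, mul_pow, Real.sq_sqrt hM.le, Real.sq_sqrt (by positivity : (0:ℝ) ≤ B ^ 2 / ns),
        Real.sq_sqrt (by linarith : (0:ℝ) ≤ 2 * L)]
    rw [hexp] at hsq
    have h1 : (ns:ℝ) * (M * (B ^ 2 / ns) * (2 * L)) = 2 * B ^ 2 * M * L := by
      field_simp
    calc 2 * B ^ 2 * M * L = (ns:ℝ) * (M * (B ^ 2 / ns) * (2 * L)) := h1.symm
      _ ≤ (ns:ℝ) * ε ^ 2 := mul_le_mul_of_nonneg_left hsq hns'.le
  -- basic properties of ℓ and Z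
  have hℓeq : ℓ = fun x => ⟪F, φ x⟫ := funext hℓ
  have hℓsm : StronglyMeasurable ℓ := by
    rw [hℓeq]; exact stronglyMeasurable_const.inner hφsm
  have hℓmeas : Measurable ℓ := hℓsm.measurable
  have hℓbdd : ∀ x, |ℓ x| ≤ Real.sqrt M * ‖F‖ := fun x => by
    rw [hℓ x]
    calc |⟪F, φ x⟫| ≤ ‖F‖ * ‖φ x‖ := abs_real_inner_le_norm F (φ x)
      _ ≤ ‖F‖ * Real.sqrt M := mul_le_mul_of_nonneg_left (hφ x) (norm_nonneg F)
      _ = Real.sqrt M * ‖F‖ := mul_comm _ _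
  set Z : X → ℝ := fun x => w x * ℓ x with hZdef
  set c : ℝ := B * (Real.sqrt M * ‖F‖) with hcdef
  have hc0 : 0 < c := mul_pos hB (mul_pos hsM hFn)
  have hZmeas : Measurable Z := hwmeas.mul hℓmeas
  have hZbdd : ∀ x, |Z x| ≤ c := fun x => by
    rw [hZdef]
    calc |w x * ℓ x| = |w x| * |ℓ x| := abs_mul _ _
      _ = w x * |ℓ x| := by rw [abs_of_nonneg (hw x).1]
      _ ≤ B * (Real.sqrt M * ‖F‖) :=
        mul_le_mul (hw x).2 (hℓbdd x) (abs_nonneg _) hB.le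
  have hZint : Integrable Z Ps := by
    refine Integrable.mono' (integrable_const c) hZmeas.aestronglyMeasurable
      (ae_of_all _ fun x => ?_)
    rw [Real.norm_eq_abs]
    exact hZbdd x
  -- identify the target risk with the weighted source mean
  set I : ℝ := ∫ x, ℓ x ∂Pt with hIdef
  have hIZ : I = ∫ x, Z x ∂Ps := by
    have hwD : (fun x => ENNReal.ofReal (w x))
        = (fun x => ((Real.toNNReal (w x) : ℝ≥0) : ℝ≥0∞)) := rfl
    rw [hIdef, hPt, hwD,
      integral_withDensity_eq_integral_smul (f := fun x => (w x).toNNReal)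
        hwmeas.real_toNNReal ℓ]
    congr 1
    funext x
    rw [hZdef, NNReal.smul_def, smul_eq_mul, Real.coe_toNNReal _ (hw x).1]
  -- the random sum
  set S : (Fin ns → X) → ℝ := fun v => ∑ i, (I - Z (v i)) with hSdef
  set μs : Measure (Fin ns → X) := Measure.pi fun _ : Fin ns => Ps with hμsdef
  have hSmeas : Measurable S :=
    Finset.measurable_sum _ fun i _ =>
      measurable_const.sub (hZmeas.comp (measurable_pi_apply i))
  set lam : ℝ := ε * ‖F‖ / c ^ 2 with hlamdef
  have hlam0 : 0 < lam := div_pos (mul_pos hε0 hFn) (pow_pos hc0 2)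
  -- mean-zero property
  have hmean0 : ∫ x, (I - Z x) ∂Ps = 0 := by
    rw [integral_sub (integrable_const I) hZint, integral_const, probReal_univ,
      one_smul, ← hIZ, sub_self]
  -- Hoeffding bound for a single variable
  have hsingle : ∫ x, Real.exp (lam * (I - Z x)) ∂Ps
      ≤ Real.exp (lam ^ 2 * (2 * c) ^ 2 / 8) := by
    have hb := mgf_bound (μ := Ps) (Y := fun x => I - Z x)
      (measurable_const.sub hZmeas) (a := I - c) (b := I + c) (by linarith)
      (fun x => ⟨by have h := abs_le.1 (hZbdd x); show I - c ≤ I - Z x; linarith [h.2],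
        by have h := abs_le.1 (hZbdd x); show I - Z x ≤ I + c; linarith [h.1]⟩) hmean0 lam
    have : I + c - (I - c) = 2 * c := by ring
    rwa [this] at hb
  -- boundedness of S
  have hSbdd : ∀ v, |S v| ≤ (ns : ℝ) * (|I| + c) := fun v => by
    rw [hSdef]
    calc |∑ i, (I - Z (v i))| ≤ ∑ i, |I - Z (v i)| := Finset.abs_sum_le_sum_abs _ _
      _ ≤ ∑ _i : Fin ns, (|I| + c) := by
          refine Finset.sum_le_sum fun i _ => ?_
          have h1 : |I - Z (v i)| ≤ |I| + |Z (v i)| := by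
            rw [sub_eq_add_neg]
            simpa using abs_add_le I (-(Z (v i)))
          linarith [hZbdd (v i)]
      _ = (ns : ℝ) * (|I| + c) := by
          rw [Finset.sum_const, Finset.card_univ, Fintype.card_fin, nsmul_eq_mul]
  -- integrability of the exponential of S
  have hSexp_int : Integrable (fun v => Real.exp (lam * S v)) μs := by
    refine Integrable.mono' (integrable_const (Real.exp (|lam| * ((ns:ℝ) * (|I| + c)))))
      (Real.measurable_exp.comp (hSmeas.const_mul lam)).aestronglyMeasurable
      (ae_of_all _ fun v => ?_)
    rw [Real.norm_eq_abs, Real.abs_exp]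
    apply Real.exp_le_exp.2
    calc lam * S v ≤ |lam * S v| := le_abs_self _
      _ = |lam| * |S v| := abs_mul _ _
      _ ≤ |lam| * ((ns:ℝ) * (|I| + c)) := mul_le_mul_of_nonneg_left (hSbdd v) (abs_nonneg _)
  -- mgf of S factorizes
  have hmgf_eq : ProbabilityTheory.mgf S μs lam
      = (∫ x, Real.exp (lam * (I - Z x)) ∂Ps) ^ ns := by
    have hpt : ∀ v : Fin ns → X, Real.exp (lam * S v)
        = ∏ i, Real.exp (lam * (I - Z (v i))) := fun v => by
      rw [hSdef, Finset.mul_sum, Real.exp_sum]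
    calc ProbabilityTheory.mgf S μs lam = ∫ v, Real.exp (lam * S v) ∂μs := rfl
      _ = ∫ v, ∏ i, Real.exp (lam * (I - Z (v i))) ∂μs := by
          simp_rw [hpt]
      _ = (∫ x, Real.exp (lam * (I - Z x)) ∂Ps) ^ ns := by
          rw [hμsdef]
          exact integral_prod_pi Ps (fun x => Real.exp (lam * (I - Z x))) ns
  -- Chernoff bound
  have hchern : μs {v | (ns:ℝ) * (ε * ‖F‖) ≤ S v}
      ≤ ENNReal.ofReal (Real.exp (-((ns:ℝ) * ε ^ 2 / (2 * B ^ 2 * M)))) := by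
    have h := ProbabilityTheory.measure_ge_le_exp_mul_mgf (X := S) (μ := μs)
      ((ns:ℝ) * (ε * ‖F‖)) hlam0.le hSexp_int
    rw [hmgf_eq] at h
    have hpow : (∫ x, Real.exp (lam * (I - Z x)) ∂Ps) ^ ns
        ≤ (Real.exp (lam ^ 2 * (2 * c) ^ 2 / 8)) ^ ns :=
      pow_le_pow_left₀ (integral_nonneg fun x => (Real.exp_pos _).le) hsingle ns
    have hc2 : c ^ 2 = B ^ 2 * M * ‖F‖ ^ 2 := by
      rw [hcdef, mul_pow, mul_pow, Real.sq_sqrt hM.le]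
      ring
    have hfinal : Real.exp (-lam * ((ns:ℝ) * (ε * ‖F‖)))
        * (Real.exp (lam ^ 2 * (2 * c) ^ 2 / 8)) ^ ns
        = Real.exp (-((ns:ℝ) * ε ^ 2 / (2 * B ^ 2 * M))) := by
      rw [← Real.exp_nat_mul, ← Real.exp_add]
      congr 1
      have h2c : (2 * c) ^ 2 = 4 * c ^ 2 := by ring
      rw [hlamdef, h2c, hc2]
      field_simp
      ring
    have hle : (μs {v | (ns:ℝ) * (ε * ‖F‖) ≤ S v}).toReal
        ≤ Real.exp (-((ns:ℝ) * ε ^ 2 / (2 * B ^ 2 * M))) := by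
      calc (μs {v | (ns:ℝ) * (ε * ‖F‖) ≤ S v}).toReal
          ≤ Real.exp (-lam * ((ns:ℝ) * (ε * ‖F‖)))
            * (∫ x, Real.exp (lam * (I - Z x)) ∂Ps) ^ ns := h
        _ ≤ Real.exp (-lam * ((ns:ℝ) * (ε * ‖F‖)))
            * (Real.exp (lam ^ 2 * (2 * c) ^ 2 / 8)) ^ ns :=
            mul_le_mul_of_nonneg_left hpow (Real.exp_nonneg _)
        _ = Real.exp (-((ns:ℝ) * ε ^ 2 / (2 * B ^ 2 * M))) := hfinal
    exact (ENNReal.le_ofReal_iff_toReal_le (measure_ne_top _ _) (Real.exp_nonneg _)).2 hle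
  have hexpδ : Real.exp (-((ns:ℝ) * ε ^ 2 / (2 * B ^ 2 * M))) ≤ δ := by
    have hlogδ : Real.log δ = -L := by
      rw [hLdef, one_div, Real.log_inv, neg_neg]
    have h1 : -((ns:ℝ) * ε ^ 2 / (2 * B ^ 2 * M)) ≤ Real.log δ := by
      rw [hlogδ, neg_le_neg_iff]
      rw [le_div_iff₀ (by positivity : (0:ℝ) < 2 * B ^ 2 * M)]
      linarith
    calc Real.exp (-((ns:ℝ) * ε ^ 2 / (2 * B ^ 2 * M)))
        ≤ Real.exp (Real.log δ) := Real.exp_le_exp.2 h1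
      _ = δ := Real.exp_log hδ0
  -- the event only depends on the source sample
  set A : Set (Fin ns → X) := {v | I ≤ (1 / (ns : ℝ)) * ∑ i, w (v i) * ℓ (v i) + ε * ‖F‖}
    with hAdef
  have hAmeas : MeasurableSet A := by
    refine measurableSet_le measurable_const ?_
    exact ((Finset.measurable_sum _ fun i _ =>
      (hwmeas.comp (measurable_pi_apply i)).mul
        (hℓmeas.comp (measurable_pi_apply i))).const_mul _).add_const _
  have hsub : Aᶜ ⊆ {v | (ns:ℝ) * (ε * ‖F‖) ≤ S v} := by
    intro v hv
    simp only [hAdef, Set.mem_compl_iff, Set.mem_setOf_eq, not_le] at hv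
    simp only [Set.mem_setOf_eq, hSdef]
    have hsum : ∑ i, (I - Z (v i)) = (ns:ℝ) * I - ∑ i, w (v i) * ℓ (v i) := by
      rw [Finset.sum_sub_distrib, Finset.sum_const, Finset.card_univ, Fintype.card_fin,
        nsmul_eq_mul]
    rw [hsum]
    have hu : ε * ‖F‖ ≤ I - (1 / (ns:ℝ)) * ∑ i, w (v i) * ℓ (v i) := by linarith
    calc (ns:ℝ) * (ε * ‖F‖)
        ≤ (ns:ℝ) * (I - (1 / (ns:ℝ)) * ∑ i, w (v i) * ℓ (v i)) :=
          mul_le_mul_of_nonneg_left hu hns'.le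
      _ = (ns:ℝ) * I - ∑ i, w (v i) * ℓ (v i) := by
          field_simp
  have hevent : {p : (Fin ns → X) × (Fin nt → X) |
      (∫ x, ℓ x ∂Pt) ≤ (1 / (ns : ℝ)) * ∑ i, w (p.1 i) * ℓ (p.1 i) + ε * ‖F‖}
      = A ×ˢ (Set.univ : Set (Fin nt → X)) := by
    ext p
    simp only [hAdef, Set.mem_setOf_eq, Set.mem_prod, Set.mem_univ, and_true, ← hIdef]
  rw [hevent, Measure.prod_prod, measure_univ, mul_one]
  have hAc : μs Aᶜ ≤ ENNReal.ofReal δ :=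
    le_trans (measure_mono hsub) (le_trans hchern (ENNReal.ofReal_le_ofReal hexpδ))
  have h1 : μs A = 1 - μs Aᶜ := by
    conv_lhs => rw [← compl_compl A]
    rw [prob_compl_eq_one_sub hAmeas.compl]
  rw [h1]
  calc ENNReal.ofReal (1 - 2 * δ) = ENNReal.ofReal ((1 - δ) - δ) := by congr 1; ring
    _ = ENNReal.ofReal (1 - δ) - ENNReal.ofReal δ := ENNReal.ofReal_sub _ hδ0.le
    _ ≤ 1 - μs Aᶜ := tsub_le_tsub (ENNReal.ofReal_le_one.2 (by linarith)) hAc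
end

section
/- (Theorem 2, generalization bound.) Let P_s and P_t be probability measures on X with P_t absolutely continuous with respect to P_s and density ratio w = dP_t/dP_s satisfying 0 ≤ w(x) ≤ B for all x, and suppose ‖φ(x)‖ ≤ 1 for all x. Let h, g : X → ℝ and suppose the squared loss ℓ(x) = (h(x) − g(x))² satisfies: ℓ(x) ≥ 0 for all x, ℓ is induced by an element L ∈ H (i.e., ℓ(x) = ⟪L, φ(x)⟫ for all x) with ‖L‖ ≤ 4η² (as holds in a Gaussian RKHS when ‖h‖_σ ≤ η and ‖g‖_σ ≤ η), and φ is Bochner integrable with respect to P_t. Let x_1,…,x_{n_s} be i.i.d. from P_s and, independently, z_1,…,z_{n_t} be i.i.d. from P_t, and for δ ∈ (0,1) set ε_{t'} = ( √(B²/n_s + 1/n_t) + √(1/n_t) ) · (1 + √(2 log(1/δ))). Then with probability at least 1 − 2δ, the target population risk R_t = ∫ ℓ dP_t and the empirical source risk R̂_s = (1/n_s) Σ_{i=1}^{n_s} ℓ(x_i) satisfy R_t ≤ B · R̂_s + 4η² · ε_{t'}. -/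
open MeasureTheory Real Set
open scoped ENNReal NNReal

section aux
variable {ι : Type*} [Fintype ι] {α : ι → Type*} [∀ i, MeasurableSpace (α i)]
  (μ : ∀ i, Measure (α i)) [∀ i, IsProbabilityMeasure (μ i)]

lemma pi_eval_preimage (i : ι) (s : Set (α i)) :
    Measure.pi μ (Function.eval i ⁻¹' s) = μ i s := by
  classical
  rw [Set.eval_preimage, Measure.pi_pi]
  rw [Finset.prod_eq_single i (fun b _ hb => by
    rw [Function.update_of_ne hb]; exact measure_univ) (fun hi => absurd (Finset.mem_univ i) hi)]
  rw [Function.update_self]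

lemma map_eval_pi (i : ι) :
    Measure.map (Function.eval i) (Measure.pi μ) = μ i :=
  Measure.ext fun s hs => by
    rw [Measure.map_apply (measurable_pi_apply i) hs, pi_eval_preimage]

lemma iIndepFun_eval :
    ProbabilityTheory.iIndepFun
      (fun (i : ι) (ω : ∀ j, α j) => ω i) (Measure.pi μ) := by
  classical
  rw [ProbabilityTheory.iIndepFun_iff_measure_inter_preimage_eq_mul]
  intro S sets _
  have hkey : (⋂ i ∈ S, (fun ω : ∀ j, α j => ω i) ⁻¹' sets i)
      = Set.pi Set.univ (fun i => if i ∈ S then sets i else Set.univ) := by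
    ext ω
    simp only [Set.mem_iInter, Set.mem_preimage, Set.mem_pi, Set.mem_univ, true_implies]
    constructor
    · intro hm i; split_ifs with hi; exacts [hm i hi, Set.mem_univ _]
    · intro hm i hi; have := hm i; rwa [if_pos hi] at this
  rw [hkey, Measure.pi_pi]
  have : ∀ i : ι, μ i (if i ∈ S then sets i else Set.univ)
      = if i ∈ S then μ i (sets i) else 1 := by
    intro i; split <;> simp [measure_univ]
  simp_rw [this]
  rw [Finset.prod_ite_mem Finset.univ S (fun i => μ i (sets i)), Finset.univ_inter]
  exact Finset.prod_congr rfl fun i _ => (pi_eval_preimage μ i (sets i)).symm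

end aux

lemma mgf_aux {α : Type*} [MeasurableSpace α] (μ : Measure α) [IsProbabilityMeasure μ]
    (f : α → ℝ) (hf : Measurable f) (M : ℝ) (hM : 0 < M) (hbdd : ∀ x, |f x| ≤ M)
    (hmean : ∫ x, f x ∂μ = 0) (s : ℝ) :
    ∫ x, Real.exp (s * f x) ∂μ ≤ Real.exp (s ^ 2 * M ^ 2 / 2) := by
  have hMne : M ≠ 0 := hM.ne'
  have key : ∀ x, Real.exp (s * f x)
      ≤ Real.cosh (s * M) + (f x / M) * Real.sinh (s * M) := by
    intro x
    have h1 : -M ≤ f x := (abs_le.mp (hbdd x)).1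
    have h2 : f x ≤ M := (abs_le.mp (hbdd x)).2
    have ha : (0:ℝ) ≤ (M - f x) / (2 * M) := div_nonneg (by linarith) (by linarith)
    have hb : (0:ℝ) ≤ (M + f x) / (2 * M) := div_nonneg (by linarith) (by linarith)
    have hab : (M - f x) / (2 * M) + (M + f x) / (2 * M) = 1 := by field_simp; ring
    have hconv := convexOn_exp.2 (Set.mem_univ (-(s * M))) (Set.mem_univ (s * M)) ha hb hab
    simp only [smul_eq_mul] at hconv
    have harg : (M - f x) / (2 * M) * -(s * M) + (M + f x) / (2 * M) * (s * M) = s * f x := by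
      field_simp; ring
    rw [harg] at hconv
    refine hconv.trans_eq ?_
    rw [Real.cosh_eq, Real.sinh_eq]
    field_simp
    ring
  have hfint : Integrable f μ :=
    (integrable_const M).mono' hf.aestronglyMeasurable (Filter.Eventually.of_forall hbdd)
  have hexpint : Integrable (fun x => Real.exp (s * f x)) μ := by
    refine (integrable_const (Real.exp (|s| * M))).mono'
      ((hf.const_mul s).exp).aestronglyMeasurable (Filter.Eventually.of_forall fun x => ?_)
    rw [Real.norm_eq_abs, Real.abs_exp, Real.exp_le_exp]
    calc s * f x ≤ |s * f x| := le_abs_self _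
      _ = |s| * |f x| := abs_mul _ _
      _ ≤ |s| * M := by gcongr; exact hbdd x
  have hrint : Integrable (fun x => Real.cosh (s * M) + (f x / M) * Real.sinh (s * M)) μ :=
    (integrable_const _).add (((hfint.div_const M).mul_const _))
  calc ∫ x, Real.exp (s * f x) ∂μ
      ≤ ∫ x, (Real.cosh (s * M) + (f x / M) * Real.sinh (s * M)) ∂μ :=
        integral_mono hexpint hrint key
    _ = Real.cosh (s * M) := by
        rw [integral_add (integrable_const _) ((hfint.div_const M).mul_const _),
          integral_const, integral_mul_const, integral_div, hmean]
        simp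
    _ ≤ Real.exp ((s * M) ^ 2 / 2) := Real.cosh_le_exp_half_sq _
    _ = Real.exp (s ^ 2 * M ^ 2 / 2) := by rw [mul_pow]

open scoped RealInnerProductSpace BigOperators

set_option maxHeartbeats 1000000 in
/-- Theorem 2 (generalization bound): with probability at least `1 − 2δ`, the target
population risk `R_t = ∫ ℓ dP_t` of the squared loss `ℓ = (h − g)²` is bounded by
`B R̂_s + 4η² ε_{t'}`, where `R̂_s` is the empirical source risk and
`ε_{t'} = (√(B²/n_s + 1/n_t) + √(1/n_t)) (1 + √(2 log(1/δ)))`. -/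
theorem generalization_bound
    {X : Type*} [MeasurableSpace X]
    {H : Type*} [NormedAddCommGroup H] [InnerProductSpace ℝ H] [CompleteSpace H]
    (B η : ℝ) (hB : 0 < B) (hη : 0 < η)
    (φ : X → H) (hφsm : StronglyMeasurable φ) (hφ : ∀ x, ‖φ x‖ ≤ 1)
    (Ps Pt : Measure X) [IsProbabilityMeasure Ps] [IsProbabilityMeasure Pt]
    (w : X → ℝ) (hwmeas : Measurable w) (hw : ∀ x, 0 ≤ w x ∧ w x ≤ B)
    (hPt : Pt = Ps.withDensity fun x => ENNReal.ofReal (w x))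
    (hint : Integrable φ Pt)
    (h g : X → ℝ) (ℓ : X → ℝ)
    (hℓdef : ∀ x, ℓ x = (h x - g x) ^ 2)
    (hℓnonneg : ∀ x, 0 ≤ ℓ x)
    (L : H) (hℓL : ∀ x, ℓ x = ⟪L, φ x⟫) (hL : ‖L‖ ≤ 4 * η ^ 2)
    (ns nt : ℕ) (hns : 0 < ns) (hnt : 0 < nt)
    (δ : ℝ) (hδ : δ ∈ Set.Ioo (0 : ℝ) 1)
    (ε : ℝ)
    (hε : ε = (Real.sqrt (B ^ 2 / ns + 1 / nt) + Real.sqrt (1 / nt))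
          * (1 + Real.sqrt (2 * Real.log (1 / δ)))) :
    ((Measure.pi fun _ : Fin ns => Ps).prod (Measure.pi fun _ : Fin nt => Pt))
      {p : (Fin ns → X) × (Fin nt → X) |
        (∫ x, ℓ x ∂Pt) ≤ B * ((1 / (ns : ℝ)) * ∑ i, ℓ (p.1 i)) + 4 * η ^ 2 * ε}
      ≥ ENNReal.ofReal (1 - 2 * δ) := by
  classical
  obtain ⟨hδ0, hδ1⟩ := hδ
  have hns' : (0:ℝ) < ns := Nat.cast_pos.mpr hns
  have hnt' : (0:ℝ) < nt := Nat.cast_pos.mpr hnt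
  set M : ℝ := 4 * η ^ 2 with hMdef
  have hM0 : 0 < M := by positivity
  have hℓmeas : Measurable ℓ := by
    have hc : Continuous fun y : H => ⟪L, y⟫ := continuous_const.inner continuous_id
    have : StronglyMeasurable fun x => ⟪L, φ x⟫ := hc.comp_stronglyMeasurable hφsm
    have heq : ℓ = fun x => ⟪L, φ x⟫ := funext hℓL
    rw [heq]; exact this.measurable
  have hℓle : ∀ x, ℓ x ≤ M := by
    intro x
    rw [hℓL x]
    calc ⟪L, φ x⟫ ≤ ‖L‖ * ‖φ x‖ := real_inner_le_norm _ _
      _ ≤ (4 * η ^ 2) * 1 := mul_le_mul hL (hφ x) (norm_nonneg _) (by positivity)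
      _ = M := by rw [hMdef]; ring
  have hℓint : Integrable ℓ Ps :=
    (integrable_const M).mono' hℓmeas.aestronglyMeasurable
      (Filter.Eventually.of_forall fun x => by
        rw [Real.norm_eq_abs, abs_of_nonneg (hℓnonneg x)]; exact hℓle x)
  set m : ℝ := ∫ x, ℓ x ∂Ps with hmdef
  have hm0 : 0 ≤ m := integral_nonneg hℓnonneg
  have hmM : m ≤ M := by
    calc m ≤ ∫ _x, M ∂Ps := integral_mono hℓint (integrable_const M) hℓle
      _ = M := by simp
  -- target risk bounded by B * m
  have hwℓint : Integrable (fun x => w x * ℓ x) Ps :=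
    (integrable_const (B * M)).mono' (hwmeas.mul hℓmeas).aestronglyMeasurable
      (Filter.Eventually.of_forall fun x => by
        rw [Real.norm_eq_abs, abs_of_nonneg (mul_nonneg (hw x).1 (hℓnonneg x))]
        exact mul_le_mul (hw x).2 (hℓle x) (hℓnonneg x) hB.le)
  have hRt : (∫ x, ℓ x ∂Pt) ≤ B * m := by
    have h1 : (∫ x, ℓ x ∂Pt) = ∫ x, w x * ℓ x ∂Ps := by
      rw [hPt]
      have hcoe : (fun x => ENNReal.ofReal (w x))
          = fun x => ((Real.toNNReal (w x) : ℝ≥0) : ℝ≥0∞) := rfl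
      rw [hcoe, integral_withDensity_eq_integral_smul (f := fun x => (w x).toNNReal)
        (measurable_real_toNNReal.comp hwmeas) ℓ]
      congr 1; funext x
      rw [NNReal.smul_def, Real.coe_toNNReal _ (hw x).1, smul_eq_mul]
    rw [h1, hmdef, ← integral_const_mul]
    exact integral_mono hwℓint (hℓint.const_mul B)
      (fun x => mul_le_mul_of_nonneg_right (hw x).2 (hℓnonneg x))
  -- constants
  have hδlog : 0 ≤ Real.log (1 / δ) := Real.log_nonneg (by rw [le_div_iff₀ hδ0]; linarith)
  have hc0 : 0 ≤ Real.sqrt (2 * Real.log (1 / δ)) := Real.sqrt_nonneg _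
  have hε0 : 0 < ε := by
    rw [hε]
    have h1 : 0 < Real.sqrt (B ^ 2 / ns + 1 / nt) := Real.sqrt_pos.mpr (by positivity)
    have h2 : 0 ≤ Real.sqrt (1 / (nt:ℝ)) := Real.sqrt_nonneg _
    nlinarith
  have hsqlow : Real.sqrt (B ^ 2 / (ns:ℝ)) * (1 + Real.sqrt (2 * Real.log (1 / δ))) ≤ ε := by
    rw [hε]
    have h1 : Real.sqrt (B ^ 2 / (ns:ℝ)) ≤ Real.sqrt (B ^ 2 / ns + 1 / nt) :=
      Real.sqrt_le_sqrt (le_add_of_nonneg_right (by positivity))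
    have h2 : 0 ≤ Real.sqrt (1 / (nt:ℝ)) := Real.sqrt_nonneg _
    nlinarith
  have hεsq : (B ^ 2 / (ns:ℝ)) * (1 + 2 * Real.log (1 / δ)) ≤ ε ^ 2 := by
    have hA : 0 ≤ Real.sqrt (B ^ 2 / (ns:ℝ)) * (1 + Real.sqrt (2 * Real.log (1 / δ))) := by
      positivity
    have h3 := mul_self_le_mul_self hA hsqlow
    have h4 : Real.sqrt (B ^ 2 / (ns:ℝ)) ^ 2 = B ^ 2 / (ns:ℝ) := Real.sq_sqrt (by positivity)
    have h5 : Real.sqrt (2 * Real.log (1 / δ)) ^ 2 = 2 * Real.log (1 / δ) :=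
      Real.sq_sqrt (by positivity)
    nlinarith
  -- probabilistic part
  set πs : Measure (Fin ns → X) := Measure.pi (fun _ => Ps) with hπs
  haveI hπsprob : IsProbabilityMeasure πs := by rw [hπs]; infer_instance
  set g' : X → ℝ := fun x => m - ℓ x with hg'
  have hg'meas : Measurable g' := measurable_const.sub hℓmeas
  have hg'bdd : ∀ x, |g' x| ≤ M := fun x =>
    abs_le.mpr ⟨by simp only [hg']; linarith [hℓle x], by simp only [hg']; linarith [hℓnonneg x]⟩
  have hg'mean : ∫ x, g' x ∂Ps = 0 := by
    rw [hg', integral_sub (integrable_const m) hℓint, ← hmdef]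
    simp
  set s : ℝ := ε / (M * B) with hsdef
  have hs0 : 0 < s := by positivity
  set Z : Fin ns → (Fin ns → X) → ℝ := fun i ω => g' (ω i) with hZ
  have hZmeas : ∀ i, Measurable (Z i) := fun i => hg'meas.comp (measurable_pi_apply i)
  have hind : ProbabilityTheory.iIndepFun Z πs :=
    (iIndepFun_eval (fun _ : Fin ns => Ps)).comp (fun _ => g') (fun _ => hg'meas)
  set t : ℝ := M * ε / B with htdef
  have hsumeq : (∑ i, Z i) = fun ω => ∑ i, Z i ω := by
    funext ω; simp [Finset.sum_apply]
  have hSmeas : Measurable (∑ i, Z i : (Fin ns → X) → ℝ) := by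
    rw [hsumeq]; exact Finset.measurable_sum _ fun i _ => hZmeas i
  have hAbadmeas : MeasurableSet {ω : Fin ns → X | (ns:ℝ) * t ≤ (∑ i, Z i) ω} :=
    measurableSet_le measurable_const hSmeas
  have hexpint : Integrable (fun ω => Real.exp (s * (∑ i, Z i) ω)) πs := by
    refine (integrable_const (Real.exp (s * (ns * M)))).mono'
      ((hSmeas.const_mul s).exp).aestronglyMeasurable (Filter.Eventually.of_forall fun ω => ?_)
    rw [Real.norm_eq_abs, Real.abs_exp, Real.exp_le_exp]
    have hsum : (∑ i, Z i) ω ≤ (ns:ℝ) * M := by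
      rw [hsumeq]
      calc ∑ i, Z i ω ≤ ∑ _i : Fin ns, M :=
            Finset.sum_le_sum fun i _ => (abs_le.mp (hg'bdd (ω i))).2
        _ = (ns:ℝ) * M := by
            rw [Finset.sum_const, Finset.card_univ, Fintype.card_fin, nsmul_eq_mul]
    exact mul_le_mul_of_nonneg_left hsum hs0.le
  have hchern := ProbabilityTheory.measure_ge_le_exp_mul_mgf (μ := πs) (X := ∑ i, Z i)
    (t := s) ((ns:ℝ) * t) hs0.le hexpint
  have hmgf_sum : ProbabilityTheory.mgf (∑ i, Z i) πs s
      = ∏ i, ProbabilityTheory.mgf (Z i) πs s := hind.mgf_sum hZmeas Finset.univ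
  have hmgf_i : ∀ i, ProbabilityTheory.mgf (Z i) πs s ≤ Real.exp (s ^ 2 * M ^ 2 / 2) := by
    intro i
    have hmap : Measure.map (Function.eval i) πs = Ps := by
      rw [hπs]; exact map_eval_pi _ i
    have h2 : ∫ x, Real.exp (s * g' x) ∂Ps = ∫ ω, Real.exp (s * g' (ω i)) ∂πs := by
      rw [← hmap]
      exact integral_map (measurable_pi_apply i).aemeasurable
        ((hg'meas.const_mul s).exp).aestronglyMeasurable
    have h1 : ProbabilityTheory.mgf (Z i) πs s = ∫ x, Real.exp (s * g' x) ∂Ps := h2.symm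
    rw [h1]
    exact mgf_aux Ps g' hg'meas M hM0 hg'bdd hg'mean s
  have hprod : ∏ i : Fin ns, ProbabilityTheory.mgf (Z i) πs s
      ≤ Real.exp ((ns:ℝ) * (s ^ 2 * M ^ 2 / 2)) := by
    calc ∏ i : Fin ns, ProbabilityTheory.mgf (Z i) πs s
        ≤ ∏ _i : Fin ns, Real.exp (s ^ 2 * M ^ 2 / 2) :=
          Finset.prod_le_prod (fun i _ => ProbabilityTheory.mgf_nonneg) (fun i _ => hmgf_i i)
      _ = Real.exp (s ^ 2 * M ^ 2 / 2) ^ ns := by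
          rw [Finset.prod_const, Finset.card_univ, Fintype.card_fin]
      _ = Real.exp ((ns:ℝ) * (s ^ 2 * M ^ 2 / 2)) := (Real.exp_nat_mul _ ns).symm
  have hexpcalc : Real.exp (-s * ((ns:ℝ) * t)) * Real.exp ((ns:ℝ) * (s ^ 2 * M ^ 2 / 2))
      = Real.exp (-((ns:ℝ) * ε ^ 2) / (2 * B ^ 2)) := by
    rw [← Real.exp_add]
    congr 1
    rw [hsdef, htdef]
    field_simp
    ring
  have hfinal_exp : Real.exp (-((ns:ℝ) * ε ^ 2) / (2 * B ^ 2)) ≤ 2 * δ := by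
    have h1 : (1:ℝ) / 2 + Real.log (1 / δ) ≤ (ns:ℝ) * ε ^ 2 / (2 * B ^ 2) := by
      rw [le_div_iff₀ (by positivity)]
      have h2 : ((1:ℝ) / 2 + Real.log (1 / δ)) * (2 * B ^ 2)
          = (ns:ℝ) * ((B ^ 2 / ns) * (1 + 2 * Real.log (1 / δ))) := by
        field_simp
      rw [h2]
      exact mul_le_mul_of_nonneg_left hεsq hns'.le
    have h3 : Real.exp (-((ns:ℝ) * ε ^ 2) / (2 * B ^ 2))
        ≤ Real.exp (-((1:ℝ) / 2 + Real.log (1 / δ))) := by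
      rw [Real.exp_le_exp, neg_div]
      linarith
    refine h3.trans ?_
    have h4 : Real.exp (-((1:ℝ) / 2 + Real.log (1 / δ)))
        = Real.exp (-(1:ℝ) / 2) * δ := by
      rw [neg_add, Real.exp_add, one_div δ, Real.log_inv, neg_neg, Real.exp_log hδ0, neg_div]
    rw [h4]
    have h5 : Real.exp (-(1:ℝ) / 2) ≤ 1 := by
      rw [show ((1:ℝ)) = Real.exp 0 by rw [Real.exp_zero], Real.exp_le_exp]
      norm_num
    nlinarith
  have hAbadbound : πs {ω : Fin ns → X | (ns:ℝ) * t ≤ (∑ i, Z i) ω} ≤ ENNReal.ofReal (2 * δ) := by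
    have h1 : (πs {ω : Fin ns → X | (ns:ℝ) * t ≤ (∑ i, Z i) ω}).toReal ≤ 2 * δ := by
      refine hchern.trans ?_
      rw [hmgf_sum]
      calc Real.exp (-s * ((ns:ℝ) * t)) * ∏ i, ProbabilityTheory.mgf (Z i) πs s
          ≤ Real.exp (-s * ((ns:ℝ) * t)) * Real.exp ((ns:ℝ) * (s ^ 2 * M ^ 2 / 2)) :=
            mul_le_mul_of_nonneg_left hprod (Real.exp_nonneg _)
        _ = Real.exp (-((ns:ℝ) * ε ^ 2) / (2 * B ^ 2)) := hexpcalc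
        _ ≤ 2 * δ := hfinal_exp
    rw [← ENNReal.ofReal_toReal (measure_ne_top πs _)]
    exact ENNReal.ofReal_le_ofReal h1
  -- inclusion of the good event
  have hsub : ({ω : Fin ns → X | (ns:ℝ) * t ≤ (∑ i, Z i) ω}ᶜ ×ˢ (Set.univ : Set (Fin nt → X)))
      ⊆ {p : (Fin ns → X) × (Fin nt → X) |
        (∫ x, ℓ x ∂Pt) ≤ B * ((1 / (ns : ℝ)) * ∑ i, ℓ (p.1 i)) + 4 * η ^ 2 * ε} := by
    rintro ⟨ω, z⟩ ⟨hω, -⟩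
    simp only [Set.mem_compl_iff, Set.mem_setOf_eq, not_le] at hω
    simp only [Set.mem_setOf_eq]
    have hsum : (∑ i, Z i) ω = (ns:ℝ) * m - ∑ i, ℓ (ω i) := by
      rw [hsumeq]
      simp only [hZ, hg']
      rw [Finset.sum_sub_distrib, Finset.sum_const, Finset.card_univ, Fintype.card_fin,
        nsmul_eq_mul]
    rw [hsum] at hω
    have hmle : m ≤ t + (1 / (ns:ℝ)) * ∑ i, ℓ (ω i) := by
      have h2 : (ns:ℝ) * m < (ns:ℝ) * (t + (1 / (ns:ℝ)) * ∑ i, ℓ (ω i)) := by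
        rw [mul_add, ← mul_assoc, mul_one_div, div_self hns'.ne', one_mul]
        linarith
      exact le_of_lt ((mul_lt_mul_iff_right₀ hns').mp h2)
    calc (∫ x, ℓ x ∂Pt) ≤ B * m := hRt
      _ ≤ B * (t + (1 / (ns:ℝ)) * ∑ i, ℓ (ω i)) := mul_le_mul_of_nonneg_left hmle hB.le
      _ = B * ((1 / (ns:ℝ)) * ∑ i, ℓ (ω i)) + 4 * η ^ 2 * ε := by
          rw [htdef, hMdef]
          field_simp
          ring
  -- conclude
  refine le_trans ?_ (measure_mono hsub)
  rw [show ((Measure.pi fun _ : Fin ns => Ps).prod (Measure.pi fun _ : Fin nt => Pt))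
      ({ω : Fin ns → X | (ns:ℝ) * t ≤ (∑ i, Z i) ω}ᶜ ×ˢ (Set.univ : Set (Fin nt → X)))
      = πs {ω : Fin ns → X | (ns:ℝ) * t ≤ (∑ i, Z i) ω}ᶜ
        * (Measure.pi fun _ : Fin nt => Pt) Set.univ from Measure.prod_prod _ _,
    measure_univ, mul_one, prob_compl_eq_one_sub hAbadmeas]
  rcases le_or_gt (1 - 2 * δ) 0 with hle | hlt
  · rw [ENNReal.ofReal_of_nonpos hle]; exact zero_le
  · have hadd : ENNReal.ofReal (1 - 2 * δ)
        + πs {ω : Fin ns → X | (ns:ℝ) * t ≤ (∑ i, Z i) ω} ≤ 1 := by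
      refine le_trans (add_le_add_right hAbadbound _) ?_
      rw [← ENNReal.ofReal_add hlt.le (by linarith), ← ENNReal.ofReal_one]
      exact ENNReal.ofReal_le_ofReal (by linarith)
    exact ENNReal.le_sub_of_add_le_right (measure_ne_top _ _) hadd
end
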